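/- arXiv:1401.4500 — 7 statements merged into one kernel-verified Lean document; each statement's English description precedes it below -/
import Mathlib

section
/- Let τ¹, …, τᴺ be i.i.d. geometric random variables on {1,2,…} with parameter p ∈ (0,1), i.e. P(τʲ > t) = (1−p)ᵗ for all nonnegative integers t. Let T ≥ 1 be a fixed polling time, define M = min{m ≥ 1 : ∃ j, τʲ ≤ mT}, K = min{j : τʲ ≤ MT}, and ξ = (N−1)(M−1)T + (K−1)T + τᴷ. Then ξ has the same law as τ¹ (ξ is geometric with parameter p). -/
open MeasureTheory ProbabilityTheory

private lemma tail_pmf {Ω : Type*} [MeasurableSpace Ω] (μ : Measure Ω) [IsProbabilityMeasure μ]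
    (f : Ω → ℕ) (hf : Measurable f) (p : ℝ) (hp1 : p ≤ 1)
    (h : ∀ t : ℕ, μ {ω | t < f ω} = ENNReal.ofReal ((1 - p) ^ t)) :
    ∀ s : ℕ, 1 ≤ s → μ {ω | f ω = s} = ENNReal.ofReal (p * (1 - p) ^ (s - 1)) := by
  intro s hs
  have hsub : {ω | s < f ω} ⊆ {ω | s - 1 < f ω} := fun ω hω => by
    simp only [Set.mem_setOf_eq] at *; omega
  have hset : {ω | f ω = s} = {ω | s - 1 < f ω} \ {ω | s < f ω} := by
    ext ω; simp only [Set.mem_setOf_eq, Set.mem_diff, not_lt]; omega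
  have hm : MeasurableSet {ω | s < f ω} := hf measurableSet_Ioi
  rw [hset, measure_diff hsub hm.nullMeasurableSet (measure_ne_top μ _), h, h]
  rw [← ENNReal.ofReal_sub _ (pow_nonneg (by linarith) s)]
  congr 1
  have hpow : (1 - p) ^ s = (1 - p) ^ (s - 1) * (1 - p) := by
    rw [← pow_succ]; congr 1; omega
  rw [hpow]; ring

private lemma tail_zero {Ω : Type*} [MeasurableSpace Ω] (μ : Measure Ω) [IsProbabilityMeasure μ]
    (f : Ω → ℕ) (hf : Measurable f) (p : ℝ)
    (h : μ {ω | 0 < f ω} = ENNReal.ofReal ((1 - p) ^ 0)) :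
    μ {ω | f ω = 0} = 0 := by
  have hm : MeasurableSet {ω | 0 < f ω} := hf measurableSet_Ioi
  have hset : {ω | f ω = 0} = {ω | 0 < f ω}ᶜ := by
    ext ω; simp only [Set.mem_setOf_eq, Set.mem_compl_iff, not_lt]; omega
  rw [hset, measure_compl hm (measure_ne_top μ _), h]
  simp

/-- the ParRep accelerated time with polling time `T` has the same
law as a single geometric exit time. Indices of replicas are `0, …, N-1`
(zero-based), so the one-based `K` of the paper is `K+1` here and the term
`(K-1)T` becomes `K*T`. -/
theorem parRep_accelerated_time_polling
    {Ω : Type*} [MeasurableSpace Ω] (μ : Measure Ω) [IsProbabilityMeasure μ]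
    (N : ℕ) (hN : 1 ≤ N) (T : ℕ) (hT : 1 ≤ T) (p : ℝ) (hp0 : 0 < p) (hp1 : p < 1)
    (τ : ℕ → Ω → ℕ) (hmeas : ∀ j, Measurable (τ j))
    (hindep : iIndepFun (fun j : Fin N => τ j) μ)
    (hgeom : ∀ j < N, ∀ t : ℕ, μ {ω | t < τ j ω} = ENNReal.ofReal ((1 - p) ^ t))
    (M : Ω → ℕ) (hM : ∀ ω, M ω = sInf {m | 1 ≤ m ∧ ∃ j < N, τ j ω ≤ m * T})
    (K : Ω → ℕ) (hK : ∀ ω, K ω = sInf {j | j < N ∧ τ j ω ≤ M ω * T})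
    (ξ : Ω → ℕ)
    (hξ : ∀ ω, ξ ω = (N - 1) * (M ω - 1) * T + K ω * T + τ (K ω) ω) :
    ∀ t : ℕ, μ {ω | ξ ω = t} = μ {ω | τ 0 ω = t} := by
  intro t
  -- null set where some replica exits at time 0
  set Z : Set Ω := ⋃ j : Fin N, {ω | τ (j : ℕ) ω = 0} with hZ
  have hZ0 : μ Z = 0 := by
    refine measure_iUnion_null fun j => ?_
    exact tail_zero μ (τ j) (hmeas j) p (hgeom j j.2 0)
  -- basic properties of M and K
  have hMspec : ∀ ω, 1 ≤ M ω ∧ ∃ j < N, τ j ω ≤ M ω * T := by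
    intro ω
    rw [hM]
    refine Nat.sInf_mem (s := {m | 1 ≤ m ∧ ∃ j < N, τ j ω ≤ m * T}) ⟨τ 0 ω + 1, ?_, 0, hN, ?_⟩
    · omega
    calc τ 0 ω ≤ τ 0 ω + 1 := Nat.le_succ _
    _ = (τ 0 ω + 1) * 1 := by ring
    _ ≤ (τ 0 ω + 1) * T := Nat.mul_le_mul_left _ hT
  have hMle : ∀ ω m', 1 ≤ m' → (∃ j < N, τ j ω ≤ m' * T) → M ω ≤ m' := by
    intro ω m' h1 h2
    rw [hM]; exact Nat.sInf_le ⟨h1, h2⟩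
  have hMmin : ∀ ω m', m' < M ω → 1 ≤ m' → ∀ j < N, m' * T < τ j ω := by
    intro ω m' hlt h1 j hj
    by_contra hcon
    push_neg at hcon
    exact absurd (hMle ω m' h1 ⟨j, hj, hcon⟩) (by omega)
  have hKspec : ∀ ω, K ω < N ∧ τ (K ω) ω ≤ M ω * T := by
    intro ω
    rw [hK]
    obtain ⟨_, j, hj, hτj⟩ := hMspec ω
    exact Nat.sInf_mem (s := {j | j < N ∧ τ j ω ≤ M ω * T}) ⟨j, hj, hτj⟩
  have hKle : ∀ ω j, j < N → τ j ω ≤ M ω * T → K ω ≤ j := by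
    intro ω j hj hτj
    rw [hK]; exact Nat.sInf_le ⟨hj, hτj⟩
  have hKmin : ∀ ω j, j < K ω → j < N → M ω * T < τ j ω := by
    intro ω j hlt hj
    by_contra hcon
    push_neg at hcon
    exact absurd (hKle ω j hj hcon) (by omega)
  rcases Nat.eq_zero_or_pos t with ht0 | ht1
  · -- t = 0 : both sides are 0
    subst ht0
    rw [tail_zero μ (τ 0) (hmeas 0) p (hgeom 0 hN 0)]
    refine measure_mono_null ?_ hZ0
    intro ω hω
    simp only [Set.mem_setOf_eq] at hω
    rw [hξ] at hω
    have hKN := (hKspec ω).1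
    have : τ (K ω) ω = 0 := by omega
    exact Set.mem_iUnion.2 ⟨⟨K ω, hKN⟩, this⟩
  -- t ≥ 1
  obtain ⟨q, r, hrT, ht1'⟩ : ∃ q r, r < T ∧ t - 1 = q * T + r :=
    ⟨(t - 1) / T, (t - 1) % T, Nat.mod_lt _ hT, (Nat.div_add_mod' _ _).symm⟩
  obtain ⟨a, k, hkN, hq⟩ : ∃ a k, k < N ∧ q = N * a + k :=
    ⟨q / N, q % N, Nat.mod_lt _ hN, (Nat.div_add_mod q N).symm⟩
  obtain ⟨m, hmdef⟩ : ∃ m, m = a + 1 := ⟨_, rfl⟩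
  obtain ⟨s, hsdef⟩ : ∃ s, s = a * T + r + 1 := ⟨_, rfl⟩
  have hmT : m * T = a * T + T := by rw [hmdef]; ring
  have hs1 : 1 ≤ s := by omega
  -- the event in terms of the raw variables
  set E : Set Ω := {ω | (∀ j < k, m * T < τ j ω) ∧ τ k ω = s ∧ ∀ j, k < j → j < N → a * T < τ j ω}
    with hE
  -- measure equality via the conull set Zᶜ
  have hcompl : μ Zᶜᶜ = 0 := by simpa using hZ0
  have hmain : μ {ω | ξ ω = t} = μ E := by
    rw [show μ {ω | ξ ω = t} = μ ({ω | ξ ω = t} ∩ Zᶜ) from (measure_inter_conull hcompl).symm,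
        show μ E = μ (E ∩ Zᶜ) from (measure_inter_conull hcompl).symm]
    congr 1
    ext ω
    simp only [Set.mem_inter_iff, Set.mem_compl_iff, hZ, hE, Set.mem_iUnion, Set.mem_setOf_eq,
      not_exists]
    constructor
    · rintro ⟨hξt, hωZ⟩
      refine ⟨?_, hωZ⟩
      rw [hξ] at hξt
      have hpos : ∀ j < N, 1 ≤ τ j ω := by
        intro j hj
        have : τ j ω ≠ 0 := hωZ ⟨j, hj⟩
        omega
      obtain ⟨hm1, _⟩ := hMspec ω
      obtain ⟨hKN, hKub⟩ := hKspec ω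
      -- identify M ω, K ω, τ (K ω) ω with m, k, s
      obtain ⟨b, hbdef⟩ : ∃ b, b = M ω - 1 := ⟨_, rfl⟩
      have hMb : M ω = b + 1 := by omega
      have hlb : b * T < τ (K ω) ω := by
        rcases Nat.eq_zero_or_pos b with hb0 | hb1
        · rw [hb0]; simpa using Nat.lt_of_lt_of_le Nat.zero_lt_one (hpos _ hKN)
        · exact hMmin ω b (by omega) hb1 _ hKN
      have hub : τ (K ω) ω ≤ b * T + T := by
        have hbT : M ω * T = b * T + T := by rw [hMb]; ring
        omega
      obtain ⟨u, hu1, hu2⟩ : ∃ u, τ (K ω) ω = b * T + u + 1 ∧ u < T :=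
        ⟨τ (K ω) ω - b * T - 1, by omega, by omega⟩
      -- compute t - 1 and identify the decomposition
      have e1 : (N - 1) * b + b = N * b := by
        have hN' : N - 1 + 1 = N := by omega
        calc (N - 1) * b + b = ((N - 1) + 1) * b := by ring
        _ = N * b := by rw [hN']
      have hkey : (N - 1) * (M ω - 1) * T + K ω * T + τ (K ω) ω
          = (N * b + K ω) * T + u + 1 := by
        rw [← hbdef, hu1, ← e1]; ring
      have hexp : t - 1 = (N * b + K ω) * T + u := by omega
      have hdm := (Nat.div_mod_unique hT).2
        (⟨by rw [Nat.mul_comm T (N * b + K ω)]; omega, hu2⟩ :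
          u + T * (N * b + K ω) = t - 1 ∧ u < T)
      have hdm' := (Nat.div_mod_unique hT).2
        (⟨by rw [Nat.mul_comm T q]; omega, hrT⟩ : r + T * q = t - 1 ∧ r < T)
      have hqb : q = N * b + K ω := by omega
      have hru : r = u := by omega
      have hdm2 := (Nat.div_mod_unique hN).2
        (⟨by omega, hKN⟩ : K ω + N * b = q ∧ K ω < N)
      have hdm2' := (Nat.div_mod_unique hN).2
        (⟨by omega, hkN⟩ : k + N * a = q ∧ k < N)
      have hab : a = b := by omega
      have hKωk : K ω = k := by omega
      have hMωm : M ω = m := by omega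
      refine ⟨?_, ?_, ?_⟩
      · intro j hj
        have := hKmin ω j (by omega) (by omega)
        rwa [hMωm] at this
      · rw [← hKωk, hu1, hsdef, hab, hru]
      · intro j hjk hjN
        rcases Nat.eq_zero_or_pos b with hb0 | hb1
        · have := hpos j hjN
          rw [hab, hb0]
          omega
        · rw [hab]
          exact hMmin ω b (by omega) hb1 j hjN
    · rintro ⟨⟨h1, h2, h3⟩, hωZ⟩
      refine ⟨?_, hωZ⟩
      -- show M ω = m and K ω = k
      have hMm : M ω = m := by
        have hle : M ω ≤ m := hMle ω m (by omega) ⟨k, hkN, by omega⟩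
        have hge : m ≤ M ω := by
          by_contra hcon
          push_neg at hcon
          obtain ⟨hm1, j, hj, hτj⟩ := hMspec ω
          have hMa : M ω ≤ a := by omega
          have hmul : M ω * T ≤ a * T := Nat.mul_le_mul_right _ hMa
          have hτja : τ j ω ≤ a * T := by omega
          rcases lt_trichotomy j k with hc | hc | hc
          · have := h1 j hc; omega
          · rw [hc, h2] at hτja; omega
          · have := h3 j hc hj; omega
        omega
      have hKk : K ω = k := by
        have hle : K ω ≤ k := hKle ω k hkN (by rw [h2, hMm]; omega)
        have hge : k ≤ K ω := by
          by_contra hcon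
          push_neg at hcon
          obtain ⟨hKN, hKub⟩ := hKspec ω
          rw [hMm] at hKub
          have := h1 (K ω) hcon
          omega
        omega
      rw [hξ, hMm, hKk, h2, hmdef]
      simp only [Nat.add_sub_cancel]
      have e1 : (N - 1) * a + a = N * a := by
        have hN' : N - 1 + 1 = N := by omega
        calc (N - 1) * a + a = ((N - 1) + 1) * a := by ring
        _ = N * a := by rw [hN']
      have hkey : (N - 1) * a * T + k * T + s = q * T + r + 1 := by
        rw [hq, hsdef, ← e1]; ring
      omega
  rw [hmain]
  -- now compute μ E by independence
  set B : Fin N → Set ℕ := fun j =>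
    if (j : ℕ) < k then Set.Ioi (m * T) else if (j : ℕ) = k then {s} else Set.Ioi (a * T)
    with hB
  have hEeq : E = ⋂ j ∈ (Finset.univ : Finset (Fin N)), (fun j : Fin N => τ j) j ⁻¹' B j := by
    ext ω
    simp only [hE, hB, Set.mem_setOf_eq, Finset.mem_univ, Set.iInter_true, Set.mem_iInter,
      Set.mem_preimage]
    constructor
    · rintro ⟨h1, h2, h3⟩ j
      rcases lt_trichotomy (j : ℕ) k with hc | hc | hc
      · rw [if_pos hc]; exact h1 j hc
      · rw [if_neg (by omega), if_pos hc]
        simpa [hc] using h2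
      · rw [if_neg (by omega), if_neg (by omega)]
        exact h3 j hc j.2
    · intro h
      refine ⟨fun j hj => ?_, ?_, fun j hjk hjN => ?_⟩
      · have hjj : τ j ω ∈ (if j < k then Set.Ioi (m * T) else if j = k then ({s} : Set ℕ)
            else Set.Ioi (a * T)) := h ⟨j, by omega⟩
        rwa [if_pos hj] at hjj
      · have hjj : τ k ω ∈ (if k < k then Set.Ioi (m * T) else if k = k then ({s} : Set ℕ)
            else Set.Ioi (a * T)) := h ⟨k, hkN⟩
        rw [if_neg (lt_irrefl k), if_pos rfl] at hjj
        exact hjj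
      · have hjj : τ j ω ∈ (if j < k then Set.Ioi (m * T) else if j = k then ({s} : Set ℕ)
            else Set.Ioi (a * T)) := h ⟨j, hjN⟩
        rw [if_neg (by omega), if_neg (by omega)] at hjj
        exact hjj
  have hprod := hindep.measure_inter_preimage_eq_mul (Finset.univ)
    (sets := B) (fun i _ => MeasurableSet.of_discrete)
  rw [hEeq, hprod]
  -- each factor
  have hfac : ∀ j : Fin N, μ ((fun j : Fin N => τ j) j ⁻¹' B j)
      = ENNReal.ofReal ((if (j : ℕ) = k then p else 1) *
          (1 - p) ^ (if (j : ℕ) < k then m * T else if (j : ℕ) = k then s - 1 else a * T)) := by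
    intro j
    simp only [hB]
    by_cases hc : (j : ℕ) < k
    · simp only [if_pos hc, if_neg (show ¬ (j : ℕ) = k by omega)]
      have hpre : τ (j : ℕ) ⁻¹' Set.Ioi (m * T) = {ω | m * T < τ (j : ℕ) ω} := rfl
      rw [hpre, hgeom j j.2, one_mul]
    · by_cases hc2 : (j : ℕ) = k
      · simp only [if_neg hc, if_pos hc2]
        have hpre : τ (j : ℕ) ⁻¹' ({s} : Set ℕ) = {ω | τ (j : ℕ) ω = s} := rfl
        rw [hpre, tail_pmf μ (τ j) (hmeas j) p hp1.le (hgeom j j.2) s hs1]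
      · simp only [if_neg hc, if_neg hc2, one_mul]
        have hpre : τ (j : ℕ) ⁻¹' Set.Ioi (a * T) = {ω | a * T < τ (j : ℕ) ω} := rfl
        rw [hpre, hgeom j j.2]
  rw [Finset.prod_congr rfl (fun j _ => hfac j)]
  rw [← ENNReal.ofReal_prod_of_nonneg (fun i _ => by
    have h1p : (0 : ℝ) ≤ 1 - p := by linarith
    have h0p : (0 : ℝ) ≤ p := hp0.le
    positivity)]
  rw [Finset.prod_mul_distrib, Finset.prod_pow_eq_pow_sum]
  have hprodp : (∏ j : Fin N, if (j : ℕ) = k then p else 1) = p := by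
    rw [Finset.prod_eq_single (⟨k, hkN⟩ : Fin N)]
    · simp
    · intro b _ hb
      rw [if_neg]
      intro hc
      exact hb (by ext; simpa using hc)
    · simp
  have hsum : (∑ j : Fin N, if (j : ℕ) < k then m * T else if (j : ℕ) = k then s - 1 else a * T)
      = t - 1 := by
    rw [Fin.sum_univ_eq_sum_range
      (fun j => if j < k then m * T else if j = k then s - 1 else a * T)]
    rw [Finset.range_eq_Ico, ← Finset.sum_Ico_consecutive _ (Nat.zero_le k) (le_of_lt hkN),
      ← Finset.sum_Ico_consecutive _ (Nat.le_succ k) hkN]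
    have e1 : ∑ j ∈ Finset.Ico 0 k, (if j < k then m * T else if j = k then s - 1 else a * T)
        = k * (m * T) := by
      rw [Finset.sum_congr rfl (fun j hj => by
        rw [if_pos (Finset.mem_Ico.1 hj).2]), Finset.sum_const, Nat.card_Ico, Nat.sub_zero,
        smul_eq_mul]
    have e2 : ∑ j ∈ Finset.Ico k (k + 1), (if j < k then m * T else if j = k then s - 1 else a * T)
        = s - 1 := by
      rw [Nat.Ico_succ_singleton, Finset.sum_singleton, if_neg (lt_irrefl k), if_pos rfl]
    have e3 : ∑ j ∈ Finset.Ico (k + 1) N, (if j < k then m * T else if j = k then s - 1 else a * T)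
        = (N - (k + 1)) * (a * T) := by
      rw [Finset.sum_congr rfl (fun j hj => by
        have := Finset.mem_Ico.1 hj
        rw [if_neg (by omega), if_neg (by omega)]), Finset.sum_const, Nat.card_Ico, smul_eq_mul]
    rw [e1, e2, e3]
    have hs1' : s - 1 = a * T + r := by omega
    obtain ⟨c, hc⟩ : ∃ c, N = c + k + 1 := ⟨N - k - 1, by omega⟩
    have hkey : k * (m * T) + (a * T + r) + (N - (k + 1)) * (a * T) = q * T + r := by
      rw [hq, hc, hmdef]
      have hcc : c + k + 1 - (k + 1) = c := by omega
      rw [hcc]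
      ring
    omega
  rw [hprodp, hsum]
  rw [tail_pmf μ (τ 0) (hmeas 0) p hp1.le (hgeom 0 hN) t ht1]
end

section
/- Let τ¹, …, τᴺ be i.i.d. geometric random variables with parameter p ∈ (0,1) (supported on {1,2,…}). Define K = min{j ∈ {1,…,N} : τʲ = min(τ¹,…,τᴺ)} and ξ = N(min(τ¹,…,τᴺ) − 1) + K. Then ξ is geometric with parameter p, i.e. ξ has the same law as τ¹. -/
open MeasureTheory ProbabilityTheory

private lemma aux_decomp (N a k b l : ℕ) (hN : 0 < N) (hk : k < N) (hl : l < N)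
    (h : N * a + k = N * b + l) : a = b ∧ k = l := by
  have ha : (N * a + k) / N = a := by
    rw [Nat.mul_add_div hN, Nat.div_eq_of_lt hk, Nat.add_zero]
  have hb : (N * b + l) / N = b := by
    rw [Nat.mul_add_div hN, Nat.div_eq_of_lt hl, Nat.add_zero]
  have hab : a = b := by rw [← ha, ← hb, h]
  subst hab
  exact ⟨rfl, by omega⟩

/-- with polling time 1, ξ = N(min τ − 1) + K is geometric with
parameter `p`, i.e. it has the same law as `τ¹`. Replicas are indexed
`0, …, N-1`, so the one-based index `K` of the paper is `K+1` here. -/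
theorem parRep_accelerated_time
    {Ω : Type*} [MeasurableSpace Ω] (μ : Measure Ω) [IsProbabilityMeasure μ]
    (N : ℕ) (hN : 1 ≤ N) (p : ℝ) (hp0 : 0 < p) (hp1 : p < 1)
    (τ : ℕ → Ω → ℕ) (hmeas : ∀ j, Measurable (τ j))
    (hindep : iIndepFun (fun j : Fin N => τ j) μ)
    (hgeom : ∀ j < N, ∀ t : ℕ, μ {ω | t < τ j ω} = ENNReal.ofReal ((1 - p) ^ t))
    (m : Ω → ℕ) (hm : ∀ ω, m ω = sInf {t | ∃ j < N, τ j ω = t})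
    (K : Ω → ℕ) (hK : ∀ ω, K ω = sInf {j | j < N ∧ τ j ω = m ω})
    (ξ : Ω → ℕ) (hξ : ∀ ω, ξ ω = N * (m ω - 1) + (K ω + 1)) :
    ∀ t : ℕ, μ {ω | ξ ω = t} = μ {ω | τ 0 ω = t} := by
  have hq0 : (0:ℝ) ≤ 1 - p := by linarith
  -- preimage of Ioi
  have hgeom' : ∀ j < N, ∀ t : ℕ, μ (τ j ⁻¹' Set.Ioi t) = ENNReal.ofReal ((1 - p) ^ t) := by
    intro j hj t
    have : τ j ⁻¹' Set.Ioi t = {ω | t < τ j ω} := rfl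
    rw [this, hgeom j hj t]
  -- single point probability
  have hpoint : ∀ j < N, ∀ a : ℕ, 1 ≤ a →
      μ (τ j ⁻¹' {a}) = ENNReal.ofReal (p * (1 - p) ^ (a - 1)) := by
    intro j hj a ha
    have hset : τ j ⁻¹' {a} = (τ j ⁻¹' Set.Ioi (a - 1)) \ (τ j ⁻¹' Set.Ioi a) := by
      ext ω
      simp only [Set.mem_preimage, Set.mem_singleton_iff, Set.mem_diff, Set.mem_Ioi]
      omega
    rw [hset, measure_diff (by intro ω; simp only [Set.mem_preimage, Set.mem_Ioi]; omega)
      ((hmeas j measurableSet_Ioi).nullMeasurableSet) (measure_ne_top μ _),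
      hgeom' j hj, hgeom' j hj, ← ENNReal.ofReal_sub _ (by positivity)]
    congr 1
    obtain ⟨b, rfl⟩ : ∃ b, a = b + 1 := ⟨a - 1, by omega⟩
    simp only [Nat.add_sub_cancel]
    rw [pow_succ]
    ring
  have hzero : ∀ j < N, μ {ω | τ j ω = 0} = 0 := by
    intro j hj
    have h0 : {ω | τ j ω = 0} = {ω | 0 < τ j ω}ᶜ := by
      ext ω; simp [Nat.pos_iff_ne_zero]
    have h1 : μ {ω | 0 < τ j ω} = 1 := by
      rw [hgeom j hj 0]; simp
    rw [h0, measure_compl (by exact hmeas j measurableSet_Ioi) (measure_ne_top μ _), h1]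
    simp
  -- pointwise structure facts
  have hmmem : ∀ ω, ∃ j, j < N ∧ τ j ω = m ω := by
    intro ω
    have hne : {t | ∃ j < N, τ j ω = t}.Nonempty := ⟨τ 0 ω, 0, hN, rfl⟩
    have := Nat.sInf_mem hne
    rw [← hm ω] at this
    simpa using this
  have hmle : ∀ ω, ∀ j < N, m ω ≤ τ j ω := by
    intro ω j hj
    rw [hm ω]
    exact Nat.sInf_le ⟨j, hj, rfl⟩
  have hKmem : ∀ ω, K ω < N ∧ τ (K ω) ω = m ω := by
    intro ω
    have hne : {j | j < N ∧ τ j ω = m ω}.Nonempty := hmmem ω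
    have := Nat.sInf_mem hne
    rw [← hK ω] at this
    exact this
  have hKle : ∀ ω, ∀ j, j < N → τ j ω = m ω → K ω ≤ j := by
    intro ω j hj hτ
    rw [hK ω]
    exact Nat.sInf_le ⟨hj, hτ⟩
  have hKmin : ∀ ω, ∀ j, j < K ω → j < N → m ω < τ j ω := by
    intro ω j hjK hj
    have : j ∉ {j | j < N ∧ τ j ω = m ω} := by
      rw [hK ω] at hjK
      exact Nat.notMem_of_lt_sInf hjK
    have hne : τ j ω ≠ m ω := fun h => this ⟨hj, h⟩
    exact lt_of_le_of_ne (hmle ω j hj) (Ne.symm hne)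
  -- the null set where m = 0
  have hB : μ {ω | m ω = 0} = 0 := by
    have hsub : {ω | m ω = 0} ⊆ ⋃ j : Fin N, {ω | τ (j : ℕ) ω = 0} := by
      intro ω hω
      obtain ⟨j, hj, hτ⟩ := hmmem ω
      rw [hω] at hτ
      exact Set.mem_iUnion.2 ⟨⟨j, hj⟩, hτ⟩
    exact measure_mono_null hsub (measure_iUnion_null fun j => hzero j j.2)
  intro t
  rcases Nat.eq_zero_or_pos t with rfl | ht
  · have h1 : {ω | ξ ω = 0} = ∅ := by
      ext ω
      simp only [Set.mem_setOf_eq, Set.mem_empty_iff_false, iff_false]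
      rw [hξ ω]
      omega
    rw [h1, measure_empty]
    exact (hzero 0 hN).symm
  · -- main case: decompose t - 1 = N * (a - 1) + k
    obtain ⟨a, k, hkN, ha1, hdm⟩ :
        ∃ a k, k < N ∧ 1 ≤ a ∧ N * (a - 1) + k + 1 = t := by
      refine ⟨(t - 1) / N + 1, (t - 1) % N, Nat.mod_lt _ (by omega), Nat.le_add_left 1 _, ?_⟩
      have h1 := Nat.div_add_mod (t - 1) N
      simp only [Nat.add_sub_cancel]
      rw [h1]
      omega
    -- event equality up to null sets
    have hev : μ {ω | ξ ω = t} = μ {ω | m ω = a ∧ K ω = k} := by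
      have e1 : μ {ω | ξ ω = t} = μ ({ω | ξ ω = t} \ {ω | m ω = 0}) :=
        (measure_diff_null hB).symm
      have e2 : μ {ω | m ω = a ∧ K ω = k}
          = μ ({ω | m ω = a ∧ K ω = k} \ {ω | m ω = 0}) :=
        (measure_diff_null hB).symm
      rw [e1, e2]
      congr 1
      ext ω
      simp only [Set.mem_diff, Set.mem_setOf_eq]
      constructor
      · rintro ⟨hξt, hm0⟩
        refine ⟨?_, hm0⟩
        rw [hξ ω] at hξt
        have hKN := (hKmem ω).1
        have heq : N * (m ω - 1) + K ω = N * (a - 1) + k := by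
          generalize N * (m ω - 1) = M1 at hξt ⊢
          generalize N * (a - 1) = M2 at hdm ⊢
          omega
        obtain ⟨h1, h2⟩ := aux_decomp N (m ω - 1) (K ω) (a - 1) k (by omega) hKN hkN heq
        exact ⟨by omega, h2⟩
      · rintro ⟨⟨hma, hKk⟩, hm0⟩
        refine ⟨?_, hm0⟩
        rw [hξ ω, hma, hKk]
        omega
    rw [hev]
    -- express as intersection of independent events
    set A : Fin N → Set ℕ := fun i =>
      if (i : ℕ) < k then Set.Ioi a else if (i : ℕ) = k then {a} else Set.Ioi (a - 1)
      with hA_def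
    have hsetA : {ω | m ω = a ∧ K ω = k} = ⋂ i ∈ (Finset.univ : Finset (Fin N)),
        (fun j : Fin N => τ j) i ⁻¹' A i := by
      ext ω
      simp only [Set.mem_setOf_eq, Finset.mem_univ, Set.iInter_true, Set.mem_iInter,
        Set.mem_preimage]
      constructor
      · rintro ⟨hma, hKk⟩ i
        simp only [hA_def]
        rcases lt_trichotomy (i : ℕ) k with hik | hik | hik
        · rw [if_pos hik]
          have := hKmin ω i (by omega) i.2
          simp only [Set.mem_Ioi]
          omega
        · rw [if_neg (by omega), if_pos hik]
          have := (hKmem ω).2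
          rw [hKk] at this
          simp only [Set.mem_singleton_iff]
          rw [← hik] at this
          omega
        · rw [if_neg (by omega), if_neg (by omega)]
          have := hmle ω i i.2
          simp only [Set.mem_Ioi]
          omega
      · intro h
        have hτk : τ k ω = a := by
          simpa [hA_def] using h ⟨k, hkN⟩
        have hge : ∀ j, j < N → a ≤ τ j ω := by
          intro j hj
          have := h ⟨j, hj⟩
          simp only [hA_def, Fin.val_mk] at this
          rcases lt_trichotomy j k with hjk | hjk | hjk
          · rw [if_pos hjk] at this
            simp only [Set.mem_Ioi] at this
            omega
          · rw [if_neg (by omega), if_pos hjk] at this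
            simp only [Set.mem_singleton_iff] at this
            omega
          · rw [if_neg (by omega), if_neg (by omega)] at this
            simp only [Set.mem_Ioi] at this
            omega
        have hma : m ω = a := by
          have h1 : m ω ≤ a := hτk ▸ hmle ω k hkN
          obtain ⟨j, hj, hτj⟩ := hmmem ω
          have h2 : a ≤ m ω := hτj ▸ hge j hj
          omega
        refine ⟨hma, ?_⟩
        have h1 : K ω ≤ k := hKle ω k hkN (by rw [hτk, hma])
        have h2 : ¬ K ω < k := by
          intro hlt
          have hKN := (hKmem ω).1
          have hx := h ⟨K ω, hKN⟩
          simp only [hA_def, Fin.val_mk] at hx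
          rw [if_pos hlt] at hx
          simp only [Set.mem_Ioi] at hx
          have := (hKmem ω).2
          omega
        omega
    rw [hsetA]
    have hAmeas : ∀ i : Fin N, i ∈ (Finset.univ : Finset (Fin N)) → MeasurableSet (A i) :=
      fun i _ => .of_discrete
    rw [hindep.measure_inter_preimage_eq_mul Finset.univ hAmeas]
    -- compute each factor
    have hfac : ∀ i : Fin N, μ ((fun j : Fin N => τ j) i ⁻¹' A i) =
        ENNReal.ofReal ((if (i : ℕ) = k then p else 1) *
          (1 - p) ^ (if (i : ℕ) < k then a else a - 1)) := by
      intro i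
      simp only [hA_def]
      rcases lt_trichotomy (i : ℕ) k with hik | hik | hik
      · rw [if_pos hik, if_pos hik, if_neg (by omega : ¬ (i : ℕ) = k), one_mul]
        exact hgeom' i i.2 a
      · rw [if_neg (by omega : ¬ (i : ℕ) < k), if_neg (by omega : ¬ (i : ℕ) < k),
          if_pos hik, if_pos hik]
        exact hpoint i i.2 a ha1
      · rw [if_neg (by omega : ¬ (i : ℕ) < k), if_neg (by omega : ¬ (i : ℕ) < k),
          if_neg (by omega : ¬ (i : ℕ) = k), if_neg (by omega : ¬ (i : ℕ) = k), one_mul]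
        exact hgeom' i i.2 (a - 1)
    rw [Finset.prod_congr rfl (fun i _ => hfac i)]
    rw [← ENNReal.ofReal_prod_of_nonneg
      (fun i _ => mul_nonneg (by split_ifs <;> linarith) (pow_nonneg hq0 _))]
    have hrhs : {ω | τ 0 ω = t} = τ 0 ⁻¹' {t} := rfl
    rw [hrhs, hpoint 0 hN t ht]
    congr 1
    rw [Finset.prod_mul_distrib]
    have hprod1 : (∏ i : Fin N, (if (i : ℕ) = k then p else 1)) = p := by
      have heq : ∀ i : Fin N, (if (i : ℕ) = k then p else 1) =
          (if i = (⟨k, hkN⟩ : Fin N) then p else 1) := by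
        intro i
        congr 1
        simp [Fin.ext_iff]
      rw [Finset.prod_congr rfl (fun i _ => heq i), Finset.prod_ite_eq']
      simp
    have hprod2 : (∏ i : Fin N, (1 - p) ^ (if (i : ℕ) < k then a else a - 1)) =
        (1 - p) ^ (t - 1) := by
      rw [Finset.prod_pow_eq_pow_sum]
      congr 1
      rw [Fin.sum_univ_eq_sum_range (fun j => if j < k then a else a - 1) N]
      have hsum : ∑ j ∈ Finset.range N, (if j < k then a else a - 1)
          = N * (a - 1) + k := by
        rw [Finset.sum_ite]
        have hf : Finset.filter (fun j => j < k) (Finset.range N) = Finset.range k := by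
          ext j; simp; omega
        have hg : (Finset.filter (fun j => ¬ j < k) (Finset.range N)).card = N - k := by
          have : Finset.filter (fun j => ¬ j < k) (Finset.range N) = Finset.Ico k N := by
            ext j; simp; omega
          rw [this, Nat.card_Ico]
        rw [hf, Finset.sum_const, Finset.sum_const, hg, Finset.card_range,
          smul_eq_mul, smul_eq_mul]
        obtain ⟨b, rfl⟩ : ∃ b, a = b + 1 := ⟨a - 1, by omega⟩
        simp only [Nat.add_sub_cancel]
        have h2 : k + (N - k) = N := by omega
        calc k * (b + 1) + (N - k) * b = (k + (N - k)) * b + k := by ring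
          _ = N * b + k := by rw [h2]
      rw [hsum]
      generalize hM : N * (a - 1) = M at hdm ⊢
      omega
    rw [hprod1, hprod2]
end

section
/- Let (X_n) be a time-homogeneous Markov chain on Ω, S measurable, τ = min{n ≥ 0 : X_n ∉ S}, and ν a quasistationary distribution on S. If X_0 ∼ ν, then the exit time τ and the exit position X_τ are independent: for every bounded measurable f and every n ≥ 1, E^ν[f(X_τ) | τ = n] = E^ν[f(X_τ) | τ = 1]. -/
open MeasureTheory ProbabilityTheory ENNReal

/-- One step of the dynamics killed outside `S`:
`(survivalStep κ S)^[n] ν A = P^ν(X_n ∈ A, τ > n)` for `A ⊆ S`. -/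
noncomputable def survivalStep {E : Type*} [MeasurableSpace E]
    (κ : ProbabilityTheory.Kernel E E) (S : Set E) (μ : Measure E) : Measure E :=
  (μ.restrict S).bind (fun x => κ x)

/-- starting from a quasistationary distribution `ν` of `S`, the
exit time `τ` and the exit position `X_τ` are independent:
`E^ν[f(X_τ) | τ = n] = E^ν[f(X_τ) | τ = 1]` for every `n ≥ 1` and every
(nonnegative) measurable `f`.  Since `{τ = n}` means `X_0, …, X_{n-1} ∈ S`
and `X_n ∉ S`, we have `E^ν[f(X_τ) 1_{τ=n}] = ∫_S ∫_{Sᶜ} f(y) κ(x,dy)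
((survivalStep κ S)^[n-1] ν)(dx)` and `P^ν(τ = n) = ∫_S κ(x,Sᶜ)
((survivalStep κ S)^[n-1] ν)(dx)`. -/
theorem qsd_exit_time_position_indep {E : Type*} [MeasurableSpace E]
    (κ : ProbabilityTheory.Kernel E E) [IsMarkovKernel κ]
    (S : Set E) (hS : MeasurableSet S)
    (ν : Measure E) [IsProbabilityMeasure ν] (hνS : ν S = 1)
    (hQSD : ∀ n : ℕ, ∀ A : Set E, MeasurableSet A → A ⊆ S →
      ν A = (survivalStep κ S)^[n] ν A / (survivalStep κ S)^[n] ν S)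
    (f : E → ℝ≥0∞) (hf : Measurable f) :
    ∀ n : ℕ, 1 ≤ n →
      (∫⁻ x in S, (∫⁻ y in Sᶜ, f y ∂(κ x)) ∂((survivalStep κ S)^[n - 1] ν)) /
        (∫⁻ x in S, κ x Sᶜ ∂((survivalStep κ S)^[n - 1] ν)) =
      (∫⁻ x in S, (∫⁻ y in Sᶜ, f y ∂(κ x)) ∂ν) /
        (∫⁻ x in S, κ x Sᶜ ∂ν) := by
  intro n hn
  set μ := (survivalStep κ S)^[n - 1] ν with hμ
  set c := μ S with hcdef
  have hSS : ν S = μ S / μ S := hQSD (n - 1) S hS (subset_rfl)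
  have hc0 : c ≠ 0 := by
    intro h
    rw [← hcdef, h] at hSS
    simp [hνS] at hSS
  have hctop : c ≠ ⊤ := by
    intro h
    rw [← hcdef, h] at hSS
    simp [hνS] at hSS
  have hrestrict : μ.restrict S = c • (ν.restrict S) := by
    ext A hA
    rw [Measure.restrict_apply hA, Measure.smul_apply, Measure.restrict_apply hA,
      smul_eq_mul]
    have h := hQSD (n - 1) (A ∩ S) (hA.inter hS) Set.inter_subset_right
    rw [h, ← hcdef, ← hμ]
    exact (ENNReal.mul_div_cancel hc0 hctop).symm
  have key : ∀ g : E → ℝ≥0∞, ∫⁻ x in S, g x ∂μ = c * ∫⁻ x in S, g x ∂ν := by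
    intro g
    rw [show (∫⁻ x in S, g x ∂μ) = ∫⁻ x, g x ∂(μ.restrict S) from rfl, hrestrict,
      lintegral_smul_measure, smul_eq_mul]
  rw [key, key]
  exact ENNReal.mul_div_mul_left _ _ hc0 hctop
end

section
/- Let (X_n) be a Markov chain on Ω, S measurable, τ the first exit time from S, and ν a measure supported in S such that for every measurable A ⊂ S and every initial distribution μ supported in S, ν(A) = lim_{n→∞} P^μ(X_n ∈ A | τ > n). Then ν is a quasistationary distribution, i.e. ν(A) = P^ν(X_n ∈ A | τ > n) for all n and all measurable A ⊂ S, and it is the unique such distribution. -/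
open MeasureTheory ProbabilityTheory
open scoped ENNReal NNReal

open Filter in
/-- Setwise convergence of (sub)probability measures implies convergence of
lower integrals of bounded measurable functions. -/
lemma aux_tendsto_lintegral_of_setwise {E : Type*} [MeasurableSpace E]
    (μ : ℕ → Measure E) (ν : Measure E) (hm : ∀ n, μ n Set.univ ≤ 1)
    (h : ∀ A : Set E, MeasurableSet A →
      Tendsto (fun n => μ n A) atTop (nhds (ν A)))
    (f : E → ℝ≥0∞) (hf : Measurable f) (hfb : ∀ x, f x ≤ 1) :
    Tendsto (fun n => ∫⁻ x, f x ∂(μ n)) atTop (nhds (∫⁻ x, f x ∂ν)) := by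
  set g : E → ℝ := fun x => (f x).toReal with hg
  have hfx : ∀ x, f x ≠ ⊤ := fun x => ne_top_of_le_ne_top ENNReal.one_ne_top (hfb x)
  have hgf : ∀ x, ENNReal.ofReal (g x) = f x := fun x => ENNReal.ofReal_toReal (hfx x)
  have hg_mble : Measurable g := hf.ennreal_toReal
  have hg_nn : (0 : E → ℝ) ≤ᵐ[ν] g := .of_forall fun x => ENNReal.toReal_nonneg
  have hg_le1 : ∀ x, g x ≤ 1 := by
    intro x
    have := ENNReal.toReal_mono ENNReal.one_ne_top (hfb x)
    simpa using this
  have key : ∀ (m : Measure E),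
      ∫⁻ x, f x ∂m = ∫⁻ t in Set.Ioi (0:ℝ), m {a | t ≤ g a} := by
    intro m
    rw [← lintegral_eq_lintegral_meas_le m (.of_forall fun x => ENNReal.toReal_nonneg)
      hg_mble.aemeasurable]
    exact lintegral_congr fun x => (hgf x).symm
  simp_rw [key]
  have hsets : ∀ t : ℝ, MeasurableSet {a | t ≤ g a} := by
    intro t
    exact hg_mble measurableSet_Ici
  refine tendsto_lintegral_of_dominated_convergence
    (Set.indicator (Set.Ioc (0:ℝ) 1) (fun _ => (1:ℝ≥0∞))) ?_ ?_ ?_ ?_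
  · intro n
    apply Antitone.measurable
    intro s t hst
    exact measure_mono fun a ha => le_trans hst ha
  · intro n
    refine Filter.eventually_of_mem (self_mem_ae_restrict measurableSet_Ioi)
      fun t ht => ?_
    show (μ n) {a | t ≤ g a} ≤ (Set.Ioc (0:ℝ) 1).indicator (fun _ => (1:ℝ≥0∞)) t
    by_cases h1 : t ≤ 1
    · rw [Set.indicator_of_mem (Set.mem_Ioc.mpr ⟨ht, h1⟩)]
      exact le_trans (measure_mono (Set.subset_univ _)) (hm n)
    · push_neg at h1
      have : {a | t ≤ g a} = ∅ := by
        ext a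
        simp only [Set.mem_setOf_eq, Set.mem_empty_iff_false, iff_false, not_le]
        exact lt_of_le_of_lt (hg_le1 a) h1
      rw [this]
      simp
  · have hle : ∫⁻ t in Set.Ioi (0:ℝ),
        (Set.Ioc (0:ℝ) 1).indicator (fun _ => (1:ℝ≥0∞)) t
        ≤ ∫⁻ t, (Set.Ioc (0:ℝ) 1).indicator (fun _ => (1:ℝ≥0∞)) t :=
      lintegral_mono' Measure.restrict_le_self le_rfl
    refine ne_top_of_le_ne_top ?_ hle
    rw [lintegral_indicator measurableSet_Ioc]
    simp
  · exact .of_forall fun t => h _ (hsets t)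

section survivalStepLemmas

variable {E : Type*} [MeasurableSpace E] (κ : ProbabilityTheory.Kernel E E)
  [IsMarkovKernel κ] {S : Set E} (hS : MeasurableSet S)

lemma survivalStep_apply (μ : Measure E) {A : Set E} (hA : MeasurableSet A) :
    survivalStep κ S μ A = ∫⁻ x, κ x A ∂(μ.restrict S) :=
  Measure.bind_apply hA κ.measurable.aemeasurable

lemma survivalStep_univ (μ : Measure E) :
    survivalStep κ S μ Set.univ = μ S := by
  rw [survivalStep_apply κ μ MeasurableSet.univ]
  simp

lemma survivalStep_smul (c : ℝ≥0∞) (μ : Measure E) :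
    survivalStep κ S (c • μ) = c • survivalStep κ S μ := by
  ext A hA
  rw [survivalStep_apply κ _ hA, Measure.restrict_smul, lintegral_smul_measure,
    Measure.smul_apply, smul_eq_mul, survivalStep_apply κ μ hA, smul_eq_mul]

lemma survivalStep_iterate_univ_le (μ : Measure E) (hμ : μ Set.univ ≤ 1) :
    ∀ n : ℕ, (survivalStep κ S)^[n] μ Set.univ ≤ 1 := by
  intro n
  induction n with
  | zero => simpa using hμ
  | succ n ih =>
    rw [Function.iterate_succ_apply', survivalStep_univ]
    exact le_trans (measure_mono (Set.subset_univ S)) ih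

end survivalStepLemmas

/-- if `ν` (a probability measure supported in `S`) satisfies
`ν(A) = lim_n P^μ(X_n ∈ A | τ > n)` for every initial distribution `μ`
supported in `S` and every measurable `A ⊆ S`, then `ν` is a quasistationary
distribution, and it is the unique one. -/
theorem limit_conditioned_is_unique_qsd {E : Type*} [MeasurableSpace E]
    (κ : ProbabilityTheory.Kernel E E) [IsMarkovKernel κ]
    (S : Set E) (hS : MeasurableSet S)
    (hpos : ∀ (μ : Measure E), IsProbabilityMeasure μ → μ S = 1 →
      ∀ n : ℕ, (survivalStep κ S)^[n] μ S ≠ 0)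
    (ν : Measure E) [IsProbabilityMeasure ν] (hνS : ν S = 1)
    (hlim : ∀ (μ : Measure E), IsProbabilityMeasure μ → μ S = 1 →
      ∀ A : Set E, MeasurableSet A → A ⊆ S →
        Filter.Tendsto
          (fun n : ℕ => (survivalStep κ S)^[n] μ A / (survivalStep κ S)^[n] μ S)
          Filter.atTop (nhds (ν A))) :
    (∀ n : ℕ, ∀ A : Set E, MeasurableSet A → A ⊆ S →
        ν A = (survivalStep κ S)^[n] ν A / (survivalStep κ S)^[n] ν S) ∧
      (∀ ν' : Measure E, IsProbabilityMeasure ν' → ν' S = 1 →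
        (∀ n : ℕ, ∀ A : Set E, MeasurableSet A → A ⊆ S →
          ν' A = (survivalStep κ S)^[n] ν' A / (survivalStep κ S)^[n] ν' S) →
        ν' = ν) := by
  have hν_res : ν.restrict S = ν := by
    apply Measure.restrict_eq_self_of_ae_mem
    refine (MeasureTheory.mem_ae_iff).2 ?_
    have := measure_compl hS (measure_ne_top ν S)
    rw [hνS, measure_univ] at this
    simpa using this
  -- basic quantities
  set b : ℕ → ℝ≥0∞ := fun n => (survivalStep κ S)^[n] ν S with hb
  have hb0 : ∀ n, b n ≠ 0 := hpos ν inferInstance hνS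
  have hb_le1 : ∀ n, b n ≤ 1 := fun n =>
    le_trans (measure_mono (Set.subset_univ S))
      (survivalStep_iterate_univ_le κ ν (by simp) n)
  have hb_top : ∀ n, b n ≠ ⊤ := fun n =>
    ne_top_of_le_ne_top ENNReal.one_ne_top (hb_le1 n)
  set c : ℝ≥0∞ := survivalStep κ S ν S with hc
  have hc_eq : c = b 1 := by simp only [hb, hc, Function.iterate_one]
  have hc0 : c ≠ 0 := by rw [hc_eq]; exact hb0 1
  have hc_top : c ≠ ⊤ := by rw [hc_eq]; exact hb_top 1
  -- the conditioned measures
  set μt : ℕ → Measure E := fun n =>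
    (b n)⁻¹ • (((survivalStep κ S)^[n] ν).restrict S) with hμt
  have hμt_univ : ∀ n, μt n Set.univ = 1 := by
    intro n
    rw [hμt]
    simp only [Measure.smul_apply, smul_eq_mul, Measure.restrict_apply_univ]
    exact ENNReal.inv_mul_cancel (hb0 n) (hb_top n)
  -- setwise convergence of the conditioned measures to ν
  have hsetwise : ∀ A : Set E, MeasurableSet A →
      Filter.Tendsto (fun n => μt n A) Filter.atTop (nhds (ν A)) := by
    intro A hA
    have h1 := hlim ν inferInstance hνS (A ∩ S) (hA.inter hS) Set.inter_subset_right
    have hνAS : ν (A ∩ S) = ν A := by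
      conv_rhs => rw [← hν_res]
      rw [Measure.restrict_apply hA]
    rw [hνAS] at h1
    convert h1 using 2 with n
    rw [hμt]
    simp only [Measure.smul_apply, smul_eq_mul, Measure.restrict_apply hA]
    rw [ENNReal.div_eq_inv_mul]
  -- the key one-step identity: survivalStep ν A = c * ν A for A ⊆ S
  have hstep : ∀ A : Set E, MeasurableSet A → A ⊆ S →
      survivalStep κ S ν A = c * ν A := by
    intro A hA hAS
    -- integrals against the conditioned measures
    have hIA : Filter.Tendsto (fun n => ∫⁻ x, κ x A ∂(μt n)) Filter.atTop
        (nhds (∫⁻ x, κ x A ∂ν)) :=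
      aux_tendsto_lintegral_of_setwise μt ν (fun n => le_of_eq (hμt_univ n))
        hsetwise _ (κ.measurable_coe hA) (fun x => prob_le_one)
    have hIS : Filter.Tendsto (fun n => ∫⁻ x, κ x S ∂(μt n)) Filter.atTop
        (nhds (∫⁻ x, κ x S ∂ν)) :=
      aux_tendsto_lintegral_of_setwise μt ν (fun n => le_of_eq (hμt_univ n))
        hsetwise _ (κ.measurable_coe hS) (fun x => prob_le_one)
    have hIνA : ∫⁻ x, κ x A ∂ν = survivalStep κ S ν A := by
      rw [survivalStep_apply κ ν hA, hν_res]
    have hIνS : ∫⁻ x, κ x S ∂ν = c := by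
      rw [survivalStep_apply κ ν hS, hν_res] at hc
      exact hc.symm
    rw [hIνA] at hIA
    rw [hIνS] at hIS
    -- identify the ratio at time n+1
    have hratio : ∀ n : ℕ,
        (survivalStep κ S)^[n+1] ν A / (survivalStep κ S)^[n+1] ν S
          = (∫⁻ x, κ x A ∂(μt n)) / (∫⁻ x, κ x S ∂(μt n)) := by
      intro n
      have hApply : ∀ B : Set E, MeasurableSet B →
          (survivalStep κ S)^[n+1] ν B = b n * ∫⁻ x, κ x B ∂(μt n) := by
        intro B hB
        rw [Function.iterate_succ_apply', survivalStep_apply κ _ hB, hμt]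
        rw [lintegral_smul_measure, smul_eq_mul, ← mul_assoc,
          ENNReal.mul_inv_cancel (hb0 n) (hb_top n), one_mul]
      rw [hApply A hA, hApply S hS,
        ENNReal.mul_div_mul_left _ _ (hb0 n) (hb_top n)]
    -- two computations of the same limit
    have hT1 : Filter.Tendsto
        (fun n : ℕ => (survivalStep κ S)^[n+1] ν A / (survivalStep κ S)^[n+1] ν S)
        Filter.atTop (nhds (ν A)) :=
      (hlim ν inferInstance hνS A hA hAS).comp (Filter.tendsto_add_atTop_nat 1)
    have hT2 : Filter.Tendsto
        (fun n : ℕ => (survivalStep κ S)^[n+1] ν A / (survivalStep κ S)^[n+1] ν S)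
        Filter.atTop (nhds (survivalStep κ S ν A / c)) := by
      simp_rw [hratio]
      exact ENNReal.Tendsto.div hIA (Or.inr hc0) hIS (Or.inl hc_top)
    have hlim_eq : ν A = survivalStep κ S ν A / c := tendsto_nhds_unique hT1 hT2
    rw [hlim_eq, ENNReal.mul_div_cancel hc0 hc_top]
  -- the restriction of the iterates
  have hrestrict : ∀ n : ℕ,
      ((survivalStep κ S)^[n] ν).restrict S = (c ^ n) • ν := by
    intro n
    induction n with
    | zero => simpa using hν_res
    | succ n ih =>
      have : (survivalStep κ S)^[n+1] ν = (c ^ n) • survivalStep κ S ν := by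
        rw [Function.iterate_succ_apply']
        show survivalStep κ S ((survivalStep κ S)^[n] ν) = _
        have : survivalStep κ S ((survivalStep κ S)^[n] ν)
            = ((((survivalStep κ S)^[n] ν).restrict S).restrict S).bind fun x => κ x := by
          rw [Measure.restrict_restrict hS]
          simp [survivalStep]
        rw [this, ih]
        show (((c ^ n) • ν).restrict S).bind (fun x => κ x) = _
        rw [← survivalStep, survivalStep_smul]
      rw [this, Measure.restrict_smul]
      have hres1 : (survivalStep κ S ν).restrict S = c • ν := by
        ext A hA
        rw [Measure.restrict_apply hA,
          hstep (A ∩ S) (hA.inter hS) Set.inter_subset_right]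
        have : ν (A ∩ S) = ν A := by
          conv_rhs => rw [← hν_res]
          rw [Measure.restrict_apply hA]
        rw [this, Measure.smul_apply, smul_eq_mul]
      rw [hres1, smul_smul, pow_succ, mul_comm]
  have hiter : ∀ n : ℕ, ∀ A : Set E, MeasurableSet A → A ⊆ S →
      (survivalStep κ S)^[n] ν A = c ^ n * ν A := by
    intro n A hA hAS
    have : (survivalStep κ S)^[n] ν A = ((survivalStep κ S)^[n] ν).restrict S A := by
      rw [Measure.restrict_apply hA, Set.inter_eq_self_of_subset_left hAS]
    rw [this, hrestrict n, Measure.smul_apply, smul_eq_mul]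
  have hcn0 : ∀ n : ℕ, c ^ n ≠ 0 := fun n => pow_ne_zero n hc0
  have hcn_top : ∀ n : ℕ, c ^ n ≠ ⊤ := fun n => ENNReal.pow_ne_top hc_top
  constructor
  · intro n A hA hAS
    rw [hiter n A hA hAS, hiter n S hS (le_refl S), hνS, mul_one]
    have h := ENNReal.mul_div_mul_left (ν A) 1 (hcn0 n) (hcn_top n)
    rw [mul_one, div_one] at h
    exact h.symm
  · intro ν' hν' hν'S hqsd
    haveI := hν'
    have hν'_res : ν'.restrict S = ν' := by
      apply Measure.restrict_eq_self_of_ae_mem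
      refine (MeasureTheory.mem_ae_iff).2 ?_
      have := measure_compl hS (measure_ne_top ν' S)
      rw [hν'S, measure_univ] at this
      simpa using this
    have heq : ∀ A : Set E, MeasurableSet A → A ⊆ S → ν' A = ν A := by
      intro A hA hAS
      have hconst : Filter.Tendsto
          (fun n : ℕ => (survivalStep κ S)^[n] ν' A / (survivalStep κ S)^[n] ν' S)
          Filter.atTop (nhds (ν' A)) := by
        have : (fun n : ℕ => (survivalStep κ S)^[n] ν' A / (survivalStep κ S)^[n] ν' S)
            = fun _ : ℕ => ν' A := funext fun n => (hqsd n A hA hAS).symm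
        rw [this]
        exact tendsto_const_nhds
      exact tendsto_nhds_unique hconst (hlim ν' hν' hν'S A hA hAS)
    ext A hA
    have h1 : ν' A = ν' (A ∩ S) := by
      conv_lhs => rw [← hν'_res]
      rw [Measure.restrict_apply hA]
    have h2 : ν A = ν (A ∩ S) := by
      conv_lhs => rw [← hν_res]
      rw [Measure.restrict_apply hA]
    rw [h1, h2, heq (A ∩ S) (hA.inter hS) Set.inter_subset_right]
end

section
/- Let τ¹, …, τᴺ be i.i.d. geometric(p) random variables on {1,2,…}, m = min(τ¹,…,τᴺ), K = min{j : τʲ = m}, Δt > 0, and define T_corrected = (N(m−1) + K)Δt and T_continuous = N m Δt. Then E[|T_corrected − T_continuous|] = Δt · Σ_{k=1}^{N} (N−k) (1−p)^{k−1} p / (1 − (1−p)^N), and hence the absolute error equals Δt·(N/(1−(1−p)^N) − 1/p). -/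
open MeasureTheory ProbabilityTheory

lemma aux_sum (p : ℝ) (hp0 : 0 < p) :
    ∀ N : ℕ, ∑ k ∈ Finset.range N, ((N:ℝ) - 1 - k) * ((1-p)^k * p)
      = N - (1 - (1-p)^N)/p := by
  intro N
  induction N with
  | zero => simp
  | succ n ih =>
    rw [Finset.sum_range_succ]
    have h1 : ∑ k ∈ Finset.range n, (((n:ℕ)+1:ℝ) - 1 - k) * ((1-p)^k * p)
        = (∑ k ∈ Finset.range n, ((n:ℝ) - 1 - k) * ((1-p)^k * p))
          + ∑ k ∈ Finset.range n, (1-p)^k * p := by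
      rw [← Finset.sum_add_distrib]
      apply Finset.sum_congr rfl
      intro k _
      ring
    have hgeo : ∑ k ∈ Finset.range n, (1-p)^k * p = 1 - (1-p)^n := by
      rw [← Finset.sum_mul, geom_sum_eq (by intro h; nlinarith [h] : (1:ℝ)-p ≠ 1)]
      have hpne : p ≠ 0 := ne_of_gt hp0
      field_simp
      rw [show (1:ℝ) - p - 1 = -p by ring, div_eq_iff (neg_ne_zero.mpr hpne)]
      ring
    push_cast [h1, ih, hgeo]
    have hpne : p ≠ 0 := ne_of_gt hp0
    field_simp
    ring

lemma aux_prod (q p : ℝ) (s k N : ℕ) (hk : k < N) :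
    ∏ j ∈ Finset.range N, (if j < k then q^(s+1) else if j = k then q^s * p else q^s)
      = p * q^(s*N + k) := by
  have hfac : ∀ j, (if j < k then q^(s+1) else if j = k then q^s * p else q^s)
      = q^s * (if j < k then q else if j = k then p else 1) := by
    intro j; split_ifs <;> ring
  simp only [hfac]
  rw [Finset.prod_mul_distrib, Finset.prod_const]
  have hd : ∏ j ∈ Finset.range N, (if j < k then q else if j = k then p else 1)
      = q ^ k * p := by
    rw [← Finset.prod_range_mul_prod_Ico _ (le_of_lt hk),
      Finset.prod_eq_prod_Ico_succ_bot hk]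
    have e1 : ∏ j ∈ Finset.range k, (if j < k then q else if j = k then p else 1) = q ^ k := by
      have h : ∀ j ∈ Finset.range k,
          (if j < k then q else if j = k then p else 1) = q :=
        fun j hj => by simp [Finset.mem_range.mp hj]
      rw [Finset.prod_congr rfl h, Finset.prod_const, Finset.card_range]
    have e2 : ∏ j ∈ Finset.Ico (k+1) N, (if j < k then q else if j = k then p else 1) = 1 := by
      apply Finset.prod_eq_one
      intro j hj
      have := (Finset.mem_Ico.mp hj).1
      have h1 : ¬ j < k := by omega
      have h2 : j ≠ k := by omega
      simp [h1, h2]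
    rw [e1, e2]
    simp
  rw [hd, Finset.card_range, ← pow_mul, pow_add]
  ring

/-- expected discrepancy between the corrected (discrete-time)
and the original (continuous-time) ParRep accelerated-time formulas, with
polling time 1.  Replicas are indexed `0, …, N-1` (zero-based), so the paper's
one-based `K` is `K+1` here: `T_corrected = (N(m−1) + K + 1)Δt`, and the sum
`Σ_{k=1}^N (N−k) P(K=k)` becomes `Σ_{k=0}^{N-1} (N−1−k)(1−p)^k p/(1−(1−p)^N)`. -/
theorem parRep_expected_time_error
    {Ω : Type*} [MeasurableSpace Ω] (μ : Measure Ω) [IsProbabilityMeasure μ]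
    (N : ℕ) (hN : 1 ≤ N) (p : ℝ) (hp0 : 0 < p) (hp1 : p < 1) (Δt : ℝ) (hΔt : 0 < Δt)
    (τ : ℕ → Ω → ℕ) (hmeas : ∀ j, Measurable (τ j))
    (hindep : iIndepFun (fun j : Fin N => τ j) μ)
    (hgeom : ∀ j < N, ∀ t : ℕ, μ {ω | t < τ j ω} = ENNReal.ofReal ((1 - p) ^ t))
    (m : Ω → ℕ) (hm : ∀ ω, m ω = sInf {t | ∃ j < N, τ j ω = t})
    (K : Ω → ℕ) (hK : ∀ ω, K ω = sInf {j | j < N ∧ τ j ω = m ω})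
    (Tcorrected Tcontinuous : Ω → ℝ)
    (hTcor : ∀ ω, Tcorrected ω = (N * (m ω - 1) + (K ω + 1) : ℕ) * Δt)
    (hTcon : ∀ ω, Tcontinuous ω = (N * m ω : ℕ) * Δt) :
    (∫ ω, |Tcorrected ω - Tcontinuous ω| ∂μ) =
      Δt * ∑ k ∈ Finset.range N,
        ((N : ℝ) - 1 - k) * ((1 - p) ^ k * p / (1 - (1 - p) ^ N)) ∧
    (∫ ω, |Tcorrected ω - Tcontinuous ω| ∂μ) =
      Δt * ((N : ℝ) / (1 - (1 - p) ^ N) - 1 / p) := by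
  classical
  have hq0 : (0:ℝ) ≤ 1 - p := by linarith
  have hqlt1 : (1:ℝ) - p < 1 := by linarith
  have hqN : (1-p)^N < 1 := pow_lt_one₀ hq0 hqlt1 (by omega)
  have hD : 0 < 1 - (1-p)^N := by linarith
  have hNatMeas : ∀ s : Set ℕ, MeasurableSet s := fun s => trivial
  -- basic facts about m and K
  have hattain : ∀ ω, ∃ j < N, τ j ω = m ω := by
    intro ω
    have hne : {t | ∃ j < N, τ j ω = t}.Nonempty := ⟨τ 0 ω, 0, hN, rfl⟩
    rw [hm ω]
    exact Nat.sInf_mem hne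
  have hKlt : ∀ ω, K ω < N ∧ τ (K ω) ω = m ω := by
    intro ω
    have hne : {j | j < N ∧ τ j ω = m ω}.Nonempty := by
      obtain ⟨j, hj, hjm⟩ := hattain ω
      exact ⟨j, hj, hjm⟩
    rw [hK ω]
    exact Nat.sInf_mem hne
  have hmle : ∀ ω, ∀ j, j < N → m ω ≤ τ j ω := by
    intro ω j hj
    rw [hm ω]
    exact Nat.sInf_le ⟨j, hj, rfl⟩
  have hKmin : ∀ ω, ∀ j, j < N → τ j ω = m ω → K ω ≤ j := by
    intro ω j hj hjm
    rw [hK ω]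
    exact Nat.sInf_le ⟨hj, hjm⟩
  -- the events
  set S : ℕ → ℕ → Fin N → Set ℕ :=
    fun k t j => if (j:ℕ) < k then Set.Ioi t else if (j:ℕ) = k then {t} else Set.Ici t with hS
  set E : ℕ → ℕ → Set Ω := fun k t => ⋂ j ∈ Finset.univ, τ (j : Fin N) ⁻¹' S k t j with hE
  have hEmem : ∀ k t ω, ω ∈ E k t ↔ ∀ j : Fin N, τ j ω ∈ S k t j := by
    intro k t ω
    simp [hE]
  have hEmeas : ∀ k t, MeasurableSet (E k t) := by
    intro k t
    rw [hE]
    apply MeasurableSet.iInter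
    intro j
    apply MeasurableSet.iInter
    intro _
    exact hmeas j (hNatMeas _)
  -- set identity {K = k} = ⋃ t, E k t
  have hsetK : ∀ k, k < N → {ω | K ω = k} = ⋃ t, E k t := by
    intro k hk
    ext ω
    simp only [Set.mem_setOf_eq, Set.mem_iUnion]
    constructor
    · intro hKω
      refine ⟨m ω, (hEmem k (m ω) ω).mpr ?_⟩
      intro j
      by_cases h1 : (j:ℕ) < k
      · simp only [hS]
        rw [if_pos h1]
        have hle := hmle ω j j.isLt
        have hne : τ (j:ℕ) ω ≠ m ω := by
          intro he
          have := hKmin ω j j.isLt he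
          omega
        exact lt_of_le_of_ne hle (Ne.symm hne)
      · by_cases h2 : (j:ℕ) = k
        · simp only [hS]
          rw [if_neg h1, if_pos h2]
          have h3 := (hKlt ω).2
          rw [hKω] at h3
          simp only [Set.mem_singleton_iff]
          rw [h2]
          exact h3
        · simp only [hS]
          rw [if_neg h1, if_neg h2]
          exact hmle ω j j.isLt
    · rintro ⟨t, hEt⟩
      have hmem := (hEmem k t ω).mp hEt
      have hτk : τ k ω = t := by
        have := hmem ⟨k, hk⟩
        simp only [hS] at this
        simpa using this
      have hforall : ∀ j, j < N → t ≤ τ j ω := by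
        intro j hj
        have hj' := hmem ⟨j, hj⟩
        simp only [hS] at hj'
        split_ifs at hj' with h1 h2
        · exact (Set.mem_Ioi.mp hj').le
        · exact (Set.mem_singleton_iff.mp hj').ge
        · exact Set.mem_Ici.mp hj'
      have hmt : m ω = t := by
        apply le_antisymm
        · rw [hm ω]
          exact Nat.sInf_le ⟨k, hk, hτk⟩
        · obtain ⟨j, hj, hje⟩ := hattain ω
          calc t ≤ τ j ω := hforall j hj
          _ = m ω := hje
      apply le_antisymm
      · exact hKmin ω k hk (by rw [hτk, hmt])
      · by_contra hlt
        push_neg at hlt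
        have hKN := (hKlt ω).1
        have h1 := hmem ⟨K ω, hKN⟩
        simp only [hS] at h1
        rw [if_pos hlt] at h1
        have h2 := (hKlt ω).2
        rw [h2, hmt] at h1
        exact lt_irrefl t h1
  have hKmeasSet : ∀ k, k < N → MeasurableSet {ω | K ω = k} := by
    intro k hk
    rw [hsetK k hk]
    exact MeasurableSet.iUnion (fun t => hEmeas k t)
  -- individual measures
  have hIoi : ∀ j, j < N → ∀ t : ℕ, μ (τ j ⁻¹' Set.Ioi t) = ENNReal.ofReal ((1-p)^t) := by
    intro j hj t
    exact hgeom j hj t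
  have hIci : ∀ j, j < N → ∀ s : ℕ, μ (τ j ⁻¹' Set.Ici (s+1)) = ENNReal.ofReal ((1-p)^s) := by
    intro j hj s
    have h : Set.Ici (s+1) = Set.Ioi s := by
      ext x
      simp [Nat.succ_le_iff]
    rw [h]
    exact hIoi j hj s
  have hpt : ∀ j, j < N → ∀ s : ℕ,
      μ (τ j ⁻¹' {s+1}) = ENNReal.ofReal ((1-p)^s * p) := by
    intro j hj s
    have hsplit : τ j ⁻¹' Set.Ioi s = τ j ⁻¹' {s+1} ∪ τ j ⁻¹' Set.Ioi (s+1) := by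
      ext ω
      simp only [Set.mem_preimage, Set.mem_Ioi, Set.mem_union, Set.mem_singleton_iff]
      omega
    have hdisj : Disjoint (τ j ⁻¹' {s+1}) (τ j ⁻¹' Set.Ioi (s+1)) := by
      rw [Set.disjoint_left]
      intro ω h1 h2
      simp only [Set.mem_preimage, Set.mem_singleton_iff] at h1
      simp only [Set.mem_preimage, Set.mem_Ioi] at h2
      omega
    have hadd : μ (τ j ⁻¹' Set.Ioi s) = μ (τ j ⁻¹' {s+1}) + μ (τ j ⁻¹' Set.Ioi (s+1)) := by
      rw [hsplit, measure_union hdisj (hmeas j (hNatMeas _))]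
    rw [hIoi j hj s, hIoi j hj (s+1)] at hadd
    have heq : μ (τ j ⁻¹' {s+1})
        = ENNReal.ofReal ((1-p)^s) - ENNReal.ofReal ((1-p)^(s+1)) :=
      ENNReal.eq_sub_of_add_eq ENNReal.ofReal_ne_top hadd.symm
    rw [heq, ← ENNReal.ofReal_sub _ (by positivity)]
    congr 1
    ring
  -- measure of E k 0 is zero
  have hzero : ∀ j, j < N → μ {ω | τ j ω = 0} = 0 := by
    intro j hj
    have h1 : μ {ω | 0 < τ j ω} = 1 := by
      rw [hgeom j hj 0]
      simp
    have h2 : {ω | τ j ω = 0} = {ω | 0 < τ j ω}ᶜ := by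
      ext ω
      simp only [Set.mem_setOf_eq, Set.mem_compl_iff, not_lt]
      omega
    have hms : MeasurableSet {ω | 0 < τ j ω} := hmeas j (hNatMeas (Set.Ioi 0))
    rw [h2, measure_compl hms (measure_ne_top μ _), h1, measure_univ]
    simp
  have hE0 : ∀ k, k < N → μ (E k 0) = 0 := by
    intro k hk
    have hsub : E k 0 ⊆ {ω | τ k ω = 0} := by
      intro ω hω
      have := (hEmem k 0 ω).mp hω ⟨k, hk⟩
      simp only [hS] at this
      simpa using this
    exact measure_mono_null hsub (hzero k hk)
  -- measure of E k (s+1)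
  have hEmeasure : ∀ k, k < N → ∀ s : ℕ,
      μ (E k (s+1)) = ENNReal.ofReal (p * (1-p)^(s*N + k)) := by
    intro k hk s
    have hprod := hindep.measure_inter_preimage_eq_mul Finset.univ
      (sets := S k (s+1)) (fun i _ => hNatMeas _)
    have hgoal : μ (E k (s+1)) = ∏ j : Fin N, μ (τ (j:ℕ) ⁻¹' S k (s+1) j) := by
      rw [hE]
      exact hprod
    rw [hgoal]
    have hfac : ∀ j : Fin N, μ (τ (j:ℕ) ⁻¹' S k (s+1) j)
        = ENNReal.ofReal (if (j:ℕ) < k then (1-p)^(s+1)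
            else if (j:ℕ) = k then (1-p)^s * p else (1-p)^s) := by
      intro j
      by_cases h1 : (j:ℕ) < k
      · simp only [hS]
        rw [if_pos h1, if_pos h1]
        exact hIoi j j.isLt (s+1)
      · by_cases h2 : (j:ℕ) = k
        · simp only [hS]
          rw [if_neg h1, if_pos h2, if_neg h1, if_pos h2]
          exact hpt j j.isLt s
        · simp only [hS]
          rw [if_neg h1, if_neg h2, if_neg h1, if_neg h2]
          exact hIci j j.isLt s
    rw [Finset.prod_congr rfl (fun j _ => hfac j)]
    rw [← ENNReal.ofReal_prod_of_nonneg (fun j _ => by positivity)]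
    congr 1
    rw [Fin.prod_univ_eq_prod_range
      (fun j => if j < k then (1-p)^(s+1) else if j = k then (1-p)^s * p else (1-p)^s) N]
    exact aux_prod (1-p) p s k N hk
  -- pmf of K
  have hpmf : ∀ k, k < N →
      μ {ω | K ω = k} = ENNReal.ofReal ((1-p)^k * p / (1 - (1-p)^N)) := by
    intro k hk
    have hEk : ∀ t ω, ω ∈ E k t → τ k ω = t := by
      intro t ω hω
      have := (hEmem k t ω).mp hω ⟨k, hk⟩
      simp only [hS] at this
      simpa using this
    have hdisjE : Pairwise (Function.onFun Disjoint (E k)) := by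
      intro t t' hne
      rw [Function.onFun, Set.disjoint_left]
      intro ω h1 h2
      exact hne (by rw [← hEk t ω h1, hEk t' ω h2])
    rw [hsetK k hk, measure_iUnion hdisjE (fun t => hEmeas k t),
      tsum_eq_zero_add' ENNReal.summable, hE0 k hk, zero_add]
    have hterm : ∀ s : ℕ, μ (E k (s+1))
        = ENNReal.ofReal ((p * (1-p)^k) * ((1-p)^N)^s) := by
      intro s
      rw [hEmeasure k hk s]
      congr 1
      rw [show s*N + k = k + N*s from by ring, pow_add, pow_mul]
      ring
    simp only [hterm]
    rw [← ENNReal.ofReal_tsum_of_nonneg (fun s => by positivity)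
      ((summable_geometric_of_lt_one (by positivity) hqN).mul_left _)]
    congr 1
    rw [tsum_mul_left, tsum_geometric_of_lt_one (by positivity) hqN]
    have hDne : (1:ℝ) - (1-p)^N ≠ 0 := ne_of_gt hD
    field_simp
  -- a.e. m ≥ 1
  have haem : ∀ᵐ ω ∂μ, 1 ≤ m ω := by
    have hbad : μ {ω | ¬ ∀ j < N, τ j ω ≠ 0} = 0 := by
      apply measure_mono_null (t := ⋃ j : Fin N, {ω | τ (j:ℕ) ω = 0})
      · intro ω hω
        simp only [Set.mem_setOf_eq] at hω
        push_neg at hω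
        obtain ⟨j, hj, h0⟩ := hω
        exact Set.mem_iUnion.mpr ⟨⟨j, hj⟩, h0⟩
      · exact measure_iUnion_null (fun j => hzero j j.isLt)
    have haeτ : ∀ᵐ ω ∂μ, ∀ j < N, τ j ω ≠ 0 := by
      rw [ae_iff]
      exact hbad
    filter_upwards [haeτ] with ω hω
    obtain ⟨j, hj, hjm⟩ := hattain ω
    have := hω j hj
    omega
  -- the integrand
  set g : Ω → ℝ := fun ω => ∑ k ∈ Finset.range N,
    Set.indicator {ω' | K ω' = k} (fun _ => ((N:ℝ) - 1 - k) * Δt) ω with hg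
  have hcongr : ∀ᵐ ω ∂μ, |Tcorrected ω - Tcontinuous ω| = g ω := by
    filter_upwards [haem] with ω hω
    have hKN : K ω < N := (hKlt ω).1
    have hKle : (K ω : ℝ) + 1 ≤ N := by
      have : K ω + 1 ≤ N := hKN
      exact_mod_cast this
    have hdiff : Tcorrected ω - Tcontinuous ω = -(((N:ℝ) - 1 - K ω) * Δt) := by
      rw [hTcor ω, hTcon ω]
      have hcast : ((N * (m ω - 1) + (K ω + 1) : ℕ) : ℝ)
          = N * ((m ω : ℝ) - 1) + K ω + 1 := by
        push_cast [hω]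
        ring
      rw [hcast]
      push_cast
      ring
    have hnn : 0 ≤ ((N:ℝ) - 1 - K ω) * Δt := by
      apply mul_nonneg _ hΔt.le
      linarith
    rw [hdiff, abs_neg, abs_of_nonneg hnn]
    simp only [hg]
    have hind : ∀ k ∈ Finset.range N,
        Set.indicator {ω' | K ω' = k} (fun _ => ((N:ℝ) - 1 - k) * Δt) ω
          = if K ω = k then ((N:ℝ) - 1 - k) * Δt else 0 := by
      intro k _
      rw [Set.indicator_apply]
      rfl
    rw [Finset.sum_congr rfl hind, Finset.sum_ite_eq (Finset.range N) (K ω),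
      if_pos (Finset.mem_range.mpr hKN)]
  have hint : ∫ ω, |Tcorrected ω - Tcontinuous ω| ∂μ
      = ∑ k ∈ Finset.range N, ((N:ℝ) - 1 - k) * Δt * ((1-p)^k * p / (1 - (1-p)^N)) := by
    rw [integral_congr_ae hcongr]
    simp only [hg]
    rw [integral_finset_sum _ (fun k hk =>
      (integrable_const _).indicator (hKmeasSet k (Finset.mem_range.mp hk)))]
    apply Finset.sum_congr rfl
    intro k hk
    rw [integral_indicator_const _ (hKmeasSet k (Finset.mem_range.mp hk)),
      measureReal_def, hpmf k (Finset.mem_range.mp hk), ENNReal.toReal_ofReal (by positivity),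
      smul_eq_mul]
    ring
  constructor
  · rw [hint, Finset.mul_sum]
    apply Finset.sum_congr rfl
    intro k _
    ring
  · rw [hint]
    have h2 : ∑ k ∈ Finset.range N, ((N:ℝ) - 1 - k) * Δt * ((1-p)^k * p / (1 - (1-p)^N))
        = Δt * ((∑ k ∈ Finset.range N, ((N:ℝ) - 1 - k) * ((1-p)^k * p)) / (1 - (1-p)^N)) := by
      rw [Finset.sum_div, Finset.mul_sum]
      apply Finset.sum_congr rfl
      intro k _
      ring
    rw [h2, aux_sum p hp0 N]
    have hDne : (1:ℝ) - (1-p)^N ≠ 0 := ne_of_gt hD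
    have hpne : p ≠ 0 := ne_of_gt hp0
    congr 1
    field_simp
end

section
/- Let (X_n^j), j = 1,…,N, be independent copies of a Markov chain each started from the QSD ν of a state S, with first exit times τʲ and exit positions X^j_{τʲ}. With K = min{j : τʲ = min(τ¹,…,τᴺ)} and X_acc = X^K_{τᴷ}, T_acc = N(min(τ¹,…,τᴺ)−1) + K, the pair (X_acc, T_acc) has the same joint law as (X_τ, τ) for a single chain started from ν; in particular X_acc ∼ X_τ, T_acc is geometric with parameter p = P^ν(X_1 ∉ S), and X_acc and T_acc are independent. -/
open MeasureTheory ProbabilityTheory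

private lemma measurable_sInf_setOf {Ω : Type*} [MeasurableSpace Ω] {D : Ω → Set ℕ}
    (h : ∀ n : ℕ, MeasurableSet {ω | n ∈ D ω}) :
    Measurable fun ω => sInf (D ω) := by
  apply measurable_to_countable'
  intro n
  have hset : (fun ω => sInf (D ω)) ⁻¹' {n} =
      ({ω | n ∈ D ω} ∩ ⋂ m, ⋂ (_ : m < n), {ω | m ∈ D ω}ᶜ) ∪
        ({_ω : Ω | n = 0} ∩ ⋂ m, {ω | m ∈ D ω}ᶜ) := by
    ext ω
    simp only [Set.mem_preimage, Set.mem_singleton_iff, Set.mem_union, Set.mem_inter_iff,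
      Set.mem_iInter, Set.mem_compl_iff, Set.mem_setOf_eq]
    constructor
    · rintro rfl
      by_cases hD : (D ω).Nonempty
      · exact Or.inl ⟨Nat.sInf_mem hD, fun m hm => Nat.notMem_of_lt_sInf hm⟩
      · rw [Set.not_nonempty_iff_eq_empty] at hD
        exact Or.inr ⟨by simp [hD], fun m => by simp [hD]⟩
    · rintro (⟨hn, hlt⟩ | ⟨hn0, hall⟩)
      · refine le_antisymm (Nat.sInf_le hn) ?_
        by_contra hcon
        push_neg at hcon
        exact hlt _ hcon (Nat.sInf_mem ⟨n, hn⟩)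
      · have hD : D ω = ∅ := Set.eq_empty_iff_forall_notMem.2 hall
        simp [hD, hn0]
  rw [hset]
  exact ((h n).inter (MeasurableSet.iInter fun m => MeasurableSet.iInter fun _ =>
    (h m).compl)).union ((MeasurableSet.const _).inter
      (MeasurableSet.iInter fun m => (h m).compl))

/-- exactness of the ParRep parallel step with `T_poll = 1`.
The `N` replicas, started i.i.d. from the QSD `ν` of the state `S`, have exit
times `τʲ` and exit positions `Xʲ`; since the replicas start from the QSD,
each pair `(τʲ, Xʲ)` has the law of `(τ, X_τ)` for a single chain started from
`ν` — encoded here by a reference pair `(T₀, Y₀)` — with `τʲ` geometric of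
parameter `p = P^ν(X_1 ∉ S)` and independent of `Xʲ` (Theorem 2 of the paper).
Replicas are zero-indexed, so the paper's `K` is `K+1` and
`T_acc = N(min τ − 1) + K + 1`.  Then `(X_acc, T_acc) ∼ (X_τ, τ)`; in
particular `X_acc ∼ X_τ`, `T_acc` is geometric(p), and `X_acc` and `T_acc`
are independent. -/
theorem parRep_parallel_step_exact
    {Ω E : Type*} [MeasurableSpace Ω] [MeasurableSpace E]
    (μ : Measure Ω) [IsProbabilityMeasure μ]
    (N : ℕ) (hN : 1 ≤ N) (p : ℝ) (hp0 : 0 < p) (hp1 : p < 1)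
    (T₀ : Ω → ℕ) (Y₀ : Ω → E) (hT₀meas : Measurable T₀) (hY₀meas : Measurable Y₀)
    (hT₀geom : ∀ t : ℕ, μ {ω | t < T₀ ω} = ENNReal.ofReal ((1 - p) ^ t))
    (hT₀Y₀ : IndepFun T₀ Y₀ μ)
    (τ : ℕ → Ω → ℕ) (X : ℕ → Ω → E)
    (hτmeas : ∀ j, Measurable (τ j)) (hXmeas : ∀ j, Measurable (X j))
    (hindep : iIndepFun
      (fun j : Fin N => fun ω => (τ j ω, X j ω)) μ)
    (hlaw : ∀ j < N,
      Measure.map (fun ω => (τ j ω, X j ω)) μ =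
        Measure.map (fun ω => (T₀ ω, Y₀ ω)) μ)
    (K : Ω → ℕ)
    (hK : ∀ ω, K ω = sInf {j | j < N ∧ τ j ω = sInf {t | ∃ i < N, τ i ω = t}})
    (Xacc : Ω → E) (hXacc : ∀ ω, Xacc ω = X (K ω) ω)
    (Tacc : Ω → ℕ)
    (hTacc : ∀ ω, Tacc ω = N * (sInf {t | ∃ i < N, τ i ω = t} - 1) + (K ω + 1)) :
    Measure.map (fun ω => (Xacc ω, Tacc ω)) μ =
        Measure.map (fun ω => (Y₀ ω, T₀ ω)) μ ∧
      (∀ t : ℕ, μ {ω | t < Tacc ω} = ENNReal.ofReal ((1 - p) ^ t)) ∧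
      IndepFun Xacc Tacc μ := by
  have hN0 : 0 < N := hN
  set q : ℝ := 1 - p with hq_def
  have hq0 : 0 ≤ q := by simp only [hq_def]; linarith
  -- the minimum exit time
  set M : Ω → ℕ := fun ω => sInf {t | ∃ i < N, τ i ω = t} with hM_def
  -- measurability of M
  have hMmeas : Measurable M := by
    apply measurable_sInf_setOf
    intro n
    have : {ω : Ω | n ∈ {t | ∃ i < N, τ i ω = t}} = ⋃ i, ⋃ (_ : i < N), (τ i) ⁻¹' {n} := by
      ext ω; simp [Set.mem_setOf_eq]
    rw [this]
    exact MeasurableSet.iUnion fun i => MeasurableSet.iUnion fun _ =>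
      (hτmeas i) (measurableSet_singleton n)
  -- measurability of K
  have hKmeas : Measurable K := by
    have hKfun : K = fun ω => sInf {j | j < N ∧ τ j ω = M ω} := funext fun ω => hK ω
    rw [hKfun]
    apply measurable_sInf_setOf
    intro j
    have : {ω : Ω | j ∈ {j' | j' < N ∧ τ j' ω = M ω}} =
        {_ω : Ω | j < N} ∩ ⋃ m, ((τ j) ⁻¹' {m} ∩ M ⁻¹' {m}) := by
      ext ω
      simp only [Set.mem_setOf_eq, Set.mem_inter_iff, Set.mem_iUnion, Set.mem_preimage,
        Set.mem_singleton_iff]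
      constructor
      · rintro ⟨h1, h2⟩; exact ⟨h1, M ω, h2, rfl⟩
      · rintro ⟨h1, m, h2, h3⟩; exact ⟨h1, h2.trans h3.symm⟩
    rw [this]
    exact (MeasurableSet.const _).inter (MeasurableSet.iUnion fun m =>
      ((hτmeas j) (measurableSet_singleton m)).inter (hMmeas (measurableSet_singleton m)))
  -- measurability of Tacc and Xacc
  have hTaccMeas : Measurable Tacc := by
    have : Tacc = (fun pr : ℕ × ℕ => N * (pr.1 - 1) + (pr.2 + 1)) ∘ fun ω => (M ω, K ω) :=
      funext fun ω => hTacc ω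
    rw [this]
    exact (measurable_of_countable _).comp (hMmeas.prodMk hKmeas)
  have hXaccMeas : Measurable Xacc := by
    intro s hs
    have : Xacc ⁻¹' s = ⋃ k : ℕ, (K ⁻¹' {k} ∩ (X k) ⁻¹' s) := by
      ext ω
      simp only [Set.mem_preimage, Set.mem_iUnion, Set.mem_inter_iff, Set.mem_singleton_iff,
        hXacc ω]
      constructor
      · intro h; exact ⟨K ω, rfl, h⟩
      · rintro ⟨k, hk, hx⟩; rwa [hk]
    rw [this]
    exact MeasurableSet.iUnion fun k =>
      (hKmeas (measurableSet_singleton k)).inter ((hXmeas k) hs)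
  have hpairMeas : ∀ j, Measurable fun ω => (τ j ω, X j ω) :=
    fun j => (hτmeas j).prodMk (hXmeas j)
  have hpair₀Meas : Measurable fun ω => (T₀ ω, Y₀ ω) := hT₀meas.prodMk hY₀meas
  have hpairYT : Measurable fun ω => (Y₀ ω, T₀ ω) := hY₀meas.prodMk hT₀meas
  -- transfer of laws
  have hls : ∀ j < N, ∀ s : Set (ℕ × E), MeasurableSet s →
      μ ((fun ω => (τ j ω, X j ω)) ⁻¹' s) = μ ((fun ω => (T₀ ω, Y₀ ω)) ⁻¹' s) := by
    intro j hj s hs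
    rw [← Measure.map_apply (hpairMeas j) hs, hlaw j hj, Measure.map_apply hpair₀Meas hs]
  -- geometric facts
  have hT00 : μ (T₀ ⁻¹' {0}) = 0 := by
    have h1 : T₀ ⁻¹' {0} = {ω | 0 < T₀ ω}ᶜ := by
      ext ω; simp [Nat.pos_iff_ne_zero]
    have h2 : μ {ω | 0 < T₀ ω} = 1 := by
      rw [hT₀geom 0]; simp
    rw [h1, measure_compl (by exact hT₀meas measurableSet_Ioi) (measure_ne_top μ _), h2,
      measure_univ, tsub_self]
  have hT0succ : ∀ s : ℕ, μ (T₀ ⁻¹' {s + 1}) = ENNReal.ofReal (p * q ^ s) := by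
    intro s
    have h1 : T₀ ⁻¹' {s + 1} = {ω | s < T₀ ω} \ {ω | s + 1 < T₀ ω} := by
      ext ω; simp only [Set.mem_preimage, Set.mem_singleton_iff, Set.mem_diff,
        Set.mem_setOf_eq, not_lt]
      omega
    have hsub : {ω | s + 1 < T₀ ω} ⊆ {ω | s < T₀ ω} := fun ω h => by
      simp only [Set.mem_setOf_eq] at *; omega
    rw [h1, measure_diff hsub (by exact (hT₀meas measurableSet_Ioi).nullMeasurableSet)
      (measure_ne_top μ _), hT₀geom, hT₀geom, ← ENNReal.ofReal_sub _ (by positivity)]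
    congr 1
    ring
  -- exit times are a.s. positive
  have hτ0 : ∀ j < N, μ ((τ j) ⁻¹' {0}) = 0 := by
    intro j hj
    have h1 : (τ j) ⁻¹' {0} = (fun ω => (τ j ω, X j ω)) ⁻¹' ({0} ×ˢ Set.univ) := by
      ext ω; simp [eq_comm]
    have h2 : (fun ω => (T₀ ω, Y₀ ω)) ⁻¹' ({0} ×ˢ (Set.univ : Set E)) = T₀ ⁻¹' {0} := by
      ext ω; simp [eq_comm]
    rw [h1, hls j hj _ ((measurableSet_singleton 0).prod MeasurableSet.univ), h2, hT00]
  set bad : Set Ω := ⋃ j, ⋃ (_ : j < N), (τ j) ⁻¹' {0} with hbad_def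
  have hbad : μ bad = 0 :=
    measure_iUnion_null fun j => measure_iUnion_null fun hj => hτ0 j hj
  -- the key single-time computation
  have hgood_iff : ∀ ω : Ω, ω ∉ bad ↔ ∀ j < N, 1 ≤ τ j ω := by
    intro ω
    constructor
    · intro h j hj
      by_contra hc
      refine h (Set.mem_iUnion₂.2 ⟨j, hj, ?_⟩)
      simp only [Set.mem_preimage, Set.mem_singleton_iff]
      omega
    · intro h hc
      obtain ⟨j, hj, hj0⟩ := Set.mem_iUnion₂.1 hc
      have h2 := h j hj
      simp only [Set.mem_preimage, Set.mem_singleton_iff] at hj0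
      omega
  have key : ∀ B : Set E, MeasurableSet B → ∀ t : ℕ,
      μ ((fun ω => (Xacc ω, Tacc ω)) ⁻¹' (B ×ˢ {t})) =
        μ ((fun ω => (Y₀ ω, T₀ ω)) ⁻¹' (B ×ˢ {t})) := by
    intro B hB t
    have hpreL : (fun ω => (Xacc ω, Tacc ω)) ⁻¹' (B ×ˢ {t}) =
        {ω | Xacc ω ∈ B ∧ Tacc ω = t} := by
      ext ω
      simp only [Set.mem_preimage, Set.mem_prod, Set.mem_singleton_iff, Set.mem_setOf_eq]
    have hpreR : (fun ω => (Y₀ ω, T₀ ω)) ⁻¹' (B ×ˢ {t}) = Y₀ ⁻¹' B ∩ T₀ ⁻¹' {t} := by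
      ext ω
      simp only [Set.mem_preimage, Set.mem_prod, Set.mem_singleton_iff, Set.mem_inter_iff]
    rw [hpreL, hpreR,
      hT₀Y₀.symm.measure_inter_preimage_eq_mul B {t} hB (measurableSet_singleton t)]
    rcases t with _ | s
    · -- t = 0 : both sides vanish
      have hL : {ω | Xacc ω ∈ B ∧ Tacc ω = 0} = ∅ := by
        ext ω
        simp only [Set.mem_setOf_eq, Set.mem_empty_iff_false, iff_false, not_and]
        intro _
        rw [hTacc ω, ← Nat.add_assoc]
        exact Nat.succ_ne_zero _
      rw [hL, hT00]
      simp
    · -- t = s + 1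
      rw [hT0succ s]
      set k := s % N with hk_def
      set m' := s / N with hm'_def
      have hkN : k < N := Nat.mod_lt _ hN0
      have hsNk : N * m' + k = s := Nat.div_add_mod s N
      set m := m' + 1 with hm_def
      set A : Set Ω := {ω | (∀ j < k, m < τ j ω) ∧ τ k ω = m ∧ X k ω ∈ B ∧
        ∀ j, k < j → j < N → m ≤ τ j ω} with hA_def
      -- Step 1: the accepted event agrees with A outside the null set `bad`
      have hset : {ω | Xacc ω ∈ B ∧ Tacc ω = s + 1} \ bad = A \ bad := by
        ext ω
        simp only [Set.mem_diff, hA_def, Set.mem_setOf_eq]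
        constructor
        · rintro ⟨⟨hXB, hT⟩, hg⟩
          refine ⟨?_, hg⟩
          have hgood := (hgood_iff ω).1 hg
          have hSne : {t' | ∃ i < N, τ i ω = t'}.Nonempty := ⟨τ 0 ω, 0, hN0, rfl⟩
          obtain ⟨i, hiN, hi⟩ : ∃ i < N, τ i ω = M ω := Nat.sInf_mem hSne
          have hM1 : 1 ≤ M ω := hi ▸ hgood i hiN
          have hMle : ∀ j, j < N → M ω ≤ τ j ω := fun j hj => Nat.sInf_le ⟨j, hj, rfl⟩
          have hKmem : K ω < N ∧ τ (K ω) ω = M ω := by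
            have hh : K ω ∈ {j | j < N ∧ τ j ω = M ω} := by
              rw [hK ω]
              exact Nat.sInf_mem ⟨i, hiN, hi⟩
            exact hh
          have hKmin : ∀ j, j < K ω → τ j ω ≠ M ω := by
            intro j hj hje
            have hh : j ∉ {j' | j' < N ∧ τ j' ω = M ω} := by
              rw [hK ω] at hj
              exact Nat.notMem_of_lt_sInf hj
            exact hh ⟨lt_trans hj hKmem.1, hje⟩
          have hT2 : N * (M ω - 1) + (K ω + 1) = s + 1 := (hTacc ω).symm.trans hT
          have hT3 : N * (M ω - 1) + K ω = s := by
            rw [← Nat.add_assoc] at hT2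
            exact Nat.add_right_cancel hT2
          have hkK : k = K ω := by
            rw [hk_def, ← hT3, Nat.mul_add_mod, Nat.mod_eq_of_lt hKmem.1]
          have hmM : m = M ω := by
            have hmm : m' = M ω - 1 := by
              rw [hm'_def, ← hT3, Nat.mul_add_div hN0, Nat.div_eq_of_lt hKmem.1, Nat.add_zero]
            omega
          refine ⟨?_, ?_, ?_, ?_⟩
          · intro j hj
            have hjK : j < K ω := hkK ▸ hj
            have h1 : M ω ≤ τ j ω := hMle j (lt_trans hjK hKmem.1)
            have h2 := hKmin j hjK
            omega
          · rw [hkK, hmM]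
            exact hKmem.2
          · rw [hkK]
            rw [hXacc ω] at hXB
            exact hXB
          · intro j _ hj2
            rw [hmM]
            exact hMle j hj2
        · rintro ⟨⟨h1, h2, h3, h4⟩, hg⟩
          have hMm : M ω = m := by
            refine le_antisymm (Nat.sInf_le ⟨k, hkN, h2⟩) ?_
            have hSne : {t' | ∃ i < N, τ i ω = t'}.Nonempty := ⟨τ 0 ω, 0, hN0, rfl⟩
            obtain ⟨i, hiN, hi⟩ : ∃ i < N, τ i ω = M ω := Nat.sInf_mem hSne
            rw [← hi]
            rcases lt_trichotomy i k with h | h | h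
            · exact le_of_lt (h1 i h)
            · rw [h, h2]
            · exact h4 i h hiN
          have hKk : K ω = k := by
            rw [hK ω]
            show sInf {j | j < N ∧ τ j ω = M ω} = k
            refine le_antisymm (Nat.sInf_le ⟨hkN, h2.trans hMm.symm⟩) ?_
            by_contra hc
            push_neg at hc
            have hne : {j | j < N ∧ τ j ω = M ω}.Nonempty :=
              ⟨k, hkN, h2.trans hMm.symm⟩
            have hmem := Nat.sInf_mem hne
            have hlt := h1 _ hc
            have hmem2 := hmem.2
            omega
          refine ⟨⟨?_, ?_⟩, hg⟩
          · rw [hXacc ω, hKk]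
            exact h3
          · have hTa : Tacc ω = N * (M ω - 1) + (K ω + 1) := hTacc ω
            rw [hTa, hKk, hMm]
            have hm1 : m - 1 = m' := by
              rw [hm_def]
              exact Nat.add_sub_cancel m' 1
            rw [hm1, ← Nat.add_assoc, hsNk]
      have hLA : μ {ω | Xacc ω ∈ B ∧ Tacc ω = s + 1} = μ A := by
        calc μ {ω | Xacc ω ∈ B ∧ Tacc ω = s + 1}
            = μ ({ω | Xacc ω ∈ B ∧ Tacc ω = s + 1} \ bad) := (measure_diff_null hbad).symm
          _ = μ (A \ bad) := by rw [hset]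
          _ = μ A := measure_diff_null hbad
      rw [hLA]
      -- Step 2: compute μ A by independence
      set c : ℕ → ENNReal := fun n =>
        if n < k then ENNReal.ofReal (q ^ m)
        else if n = k then ENNReal.ofReal (p * q ^ m') * μ (Y₀ ⁻¹' B)
        else ENNReal.ofReal (q ^ m') with hc_def
      set sets : Fin N → Set (ℕ × E) := fun j =>
        if (j : ℕ) < k then Set.Ioi m ×ˢ Set.univ
        else if (j : ℕ) = k then ({m} : Set ℕ) ×ˢ B
        else Set.Ici m ×ˢ Set.univ with hsets_def
      have hsetsMeas : ∀ j : Fin N, MeasurableSet (sets j) := by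
        intro j
        rw [hsets_def]
        dsimp only
        split_ifs
        · exact measurableSet_Ioi.prod MeasurableSet.univ
        · exact (measurableSet_singleton m).prod hB
        · exact measurableSet_Ici.prod MeasurableSet.univ
      have hAeq : A = ⋂ j : Fin N, (fun ω => (τ (j : ℕ) ω, X (j : ℕ) ω)) ⁻¹' sets j := by
        ext ω
        simp only [hA_def, Set.mem_setOf_eq, Set.mem_iInter, Set.mem_preimage]
        constructor
        · rintro ⟨h1, h2, h3, h4⟩ j
          simp only [hsets_def]
          split_ifs with hlt heq
          · exact ⟨h1 _ hlt, Set.mem_univ _⟩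
          · refine Set.mem_prod.2 ⟨?_, ?_⟩
            · simp only [Set.mem_singleton_iff]
              rw [heq]
              exact h2
            · rw [heq]
              exact h3
          · exact ⟨h4 _ (by omega) j.2, Set.mem_univ _⟩
        · intro h
          refine ⟨?_, ?_, ?_, ?_⟩
          · intro j hj
            have hh := h ⟨j, lt_trans hj hkN⟩
            simp only [hsets_def, if_pos hj] at hh
            exact hh.1
          · have hh := h ⟨k, hkN⟩
            simp only [hsets_def, if_neg (lt_irrefl k), if_pos rfl] at hh
            exact hh.1
          · have hh := h ⟨k, hkN⟩
            simp only [hsets_def, if_neg (lt_irrefl k), if_pos rfl] at hh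
            exact hh.2
          · intro j hj1 hj2
            have hh := h ⟨j, hj2⟩
            simp only [hsets_def, if_neg (by omega : ¬ j < k),
              if_neg (by omega : ¬ j = k)] at hh
            exact hh.1
      have hfac : ∀ j : Fin N, μ ((fun ω => (τ (j : ℕ) ω, X (j : ℕ) ω)) ⁻¹' sets j) =
          c (j : ℕ) := by
        intro j
        rw [hls (↑j) j.2 _ (hsetsMeas j)]
        simp only [hsets_def, hc_def]
        split_ifs with hlt heq
        · have hh : (fun ω => (T₀ ω, Y₀ ω)) ⁻¹' (Set.Ioi m ×ˢ Set.univ) = {ω | m < T₀ ω} := by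
            ext ω; simp
          rw [hh, hT₀geom]
        · have hh : (fun ω => (T₀ ω, Y₀ ω)) ⁻¹' (({m} : Set ℕ) ×ˢ B) =
              T₀ ⁻¹' {m} ∩ Y₀ ⁻¹' B := by
            ext ω
            simp only [Set.mem_preimage, Set.mem_prod, Set.mem_singleton_iff,
              Set.mem_inter_iff]
          rw [hh, hT₀Y₀.measure_inter_preimage_eq_mul _ _ (measurableSet_singleton m) hB,
            hm_def, hT0succ m']
        · have hh : (fun ω => (T₀ ω, Y₀ ω)) ⁻¹' (Set.Ici m ×ˢ Set.univ) =
              {ω | m' < T₀ ω} := by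
            ext ω
            simp only [Set.mem_preimage, Set.mem_prod, Set.mem_Ici, Set.mem_univ, and_true,
              Set.mem_setOf_eq, hm_def]
            omega
          rw [hh, hT₀geom]
      have hexp : m * k + m' + m' * (N - (k + 1)) = s := by
        obtain ⟨d, hd⟩ : ∃ d, N = k + 1 + d := ⟨N - (k + 1), by omega⟩
        have hds : N - (k + 1) = d := by omega
        rw [hds, ← hsNk, hd, hm_def]
        ring
      calc μ A
          = μ (⋂ j ∈ (Finset.univ : Finset (Fin N)),
              (fun ω => (τ (j : ℕ) ω, X (j : ℕ) ω)) ⁻¹' sets j) := by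
            rw [hAeq]; simp
        _ = ∏ j : Fin N, μ ((fun ω => (τ (j : ℕ) ω, X (j : ℕ) ω)) ⁻¹' sets j) :=
            (iIndepFun_iff_measure_inter_preimage_eq_mul.1 hindep) Finset.univ
              (fun j _ => hsetsMeas j)
        _ = ∏ j : Fin N, c (j : ℕ) := Finset.prod_congr rfl fun j _ => hfac j
        _ = ∏ n ∈ Finset.range N, c n := Fin.prod_univ_eq_prod_range c N
        _ = ENNReal.ofReal (q ^ m) ^ k * ((ENNReal.ofReal (p * q ^ m') * μ (Y₀ ⁻¹' B)) *
              ENNReal.ofReal (q ^ m') ^ (N - (k + 1))) := by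
            rw [Finset.range_eq_Ico,
              ← Finset.prod_Ico_consecutive c (Nat.zero_le k) (le_of_lt hkN),
              Finset.prod_eq_prod_Ico_succ_bot hkN c]
            have e1 : ∀ n ∈ Finset.Ico 0 k, c n = ENNReal.ofReal (q ^ m) := by
              intro n hn
              simp only [Finset.mem_Ico] at hn
              simp [hc_def, hn.2]
            have e2 : c k = ENNReal.ofReal (p * q ^ m') * μ (Y₀ ⁻¹' B) := by
              simp [hc_def]
            have e3 : ∀ n ∈ Finset.Ico (k + 1) N, c n = ENNReal.ofReal (q ^ m') := by
              intro n hn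
              simp only [Finset.mem_Ico] at hn
              have hn1 : ¬ n < k := by omega
              have hn2 : ¬ n = k := by omega
              simp [hc_def, hn1, hn2]
            rw [Finset.prod_congr rfl e1, Finset.prod_congr rfl e3, e2, Finset.prod_const,
              Finset.prod_const, Nat.card_Ico, Nat.card_Ico, Nat.sub_zero]
        _ = μ (Y₀ ⁻¹' B) * ENNReal.ofReal (p * q ^ s) := by
            have hreal : (q ^ m) ^ k * (p * q ^ m' * (q ^ m') ^ (N - (k + 1))) = p * q ^ s := by
              rw [← pow_mul, ← pow_mul, ← hexp]
              ring
            have hr2 : ENNReal.ofReal ((q ^ m) ^ k) * (ENNReal.ofReal (p * q ^ m') *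
                ENNReal.ofReal ((q ^ m') ^ (N - (k + 1)))) = ENNReal.ofReal (p * q ^ s) := by
              rw [← ENNReal.ofReal_mul (q := (q ^ m') ^ (N - (k + 1)))
                  (by positivity : (0:ℝ) ≤ p * q ^ m'),
                ← ENNReal.ofReal_mul (by positivity : (0:ℝ) ≤ (q ^ m) ^ k), hreal]
            rw [← ENNReal.ofReal_pow (pow_nonneg hq0 m) k,
              ← ENNReal.ofReal_pow (pow_nonneg hq0 m') (N - (k + 1)), ← hr2]
            ring
  -- the joint law equality
  have hmap : Measure.map (fun ω => (Xacc ω, Tacc ω)) μ =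
      Measure.map (fun ω => (Y₀ ω, T₀ ω)) μ := by
    have hfm : Measurable fun ω => (Xacc ω, Tacc ω) := hXaccMeas.prodMk hTaccMeas
    haveI : IsProbabilityMeasure (Measure.map (fun ω => (Xacc ω, Tacc ω)) μ) :=
      Measure.isProbabilityMeasure_map hfm.aemeasurable
    refine ext_of_generate_finite _ generateFrom_prod.symm isPiSystem_prod ?_ ?_
    · rintro s ⟨B, hB, C, hC, rfl⟩
      simp only [Set.mem_setOf_eq] at hB hC
      rw [show (fun x1 x2 => x1 ×ˢ x2) B C = B ×ˢ C from rfl,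
        Measure.map_apply hfm (hB.prod hC), Measure.map_apply hpairYT (hB.prod hC)]
      have hsplit : ∀ (f : Ω → E) (g : Ω → ℕ),
          (fun ω => (f ω, g ω)) ⁻¹' (B ×ˢ C) =
            ⋃ t ∈ C, (fun ω => (f ω, g ω)) ⁻¹' (B ×ˢ {t}) := by
        intro f g
        ext ω
        simp only [Set.mem_preimage, Set.mem_prod, Set.mem_iUnion, Set.mem_singleton_iff]
        constructor
        · rintro ⟨h1, h2⟩; exact ⟨g ω, h2, h1, rfl⟩
        · rintro ⟨t, ht, h1, h2⟩; exact ⟨h1, h2 ▸ ht⟩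
      have hdis : ∀ (f : Ω → E) (g : Ω → ℕ), C.PairwiseDisjoint
          (fun t => (fun ω => (f ω, g ω)) ⁻¹' (B ×ˢ {t})) := by
        intro f g a _ b _ hab
        refine Set.disjoint_left.2 fun ω h1 h2 => hab ?_
        simp only [Set.mem_preimage, Set.mem_prod, Set.mem_singleton_iff] at h1 h2
        rw [← h1.2, ← h2.2]
      rw [hsplit Xacc Tacc, hsplit Y₀ T₀,
        measure_biUnion C.to_countable (hdis Xacc Tacc)
          (fun t _ => hfm (hB.prod (measurableSet_singleton t))),
        measure_biUnion C.to_countable (hdis Y₀ T₀)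
          (fun t _ => hpairYT (hB.prod (measurableSet_singleton t)))]
      exact tsum_congr fun t => key B hB t
    · rw [Measure.map_apply hfm MeasurableSet.univ,
        Measure.map_apply hpairYT MeasurableSet.univ]
      simp
  refine ⟨hmap, ?_, ?_⟩
  · -- Tacc is geometric
    intro t
    have hfm : Measurable fun ω => (Xacc ω, Tacc ω) := hXaccMeas.prodMk hTaccMeas
    have h1 : {ω | t < Tacc ω} =
        (fun ω => (Xacc ω, Tacc ω)) ⁻¹' (Set.univ ×ˢ Set.Ioi t) := by
      ext ω; simp
    have h2 : (fun ω => (Y₀ ω, T₀ ω)) ⁻¹' (Set.univ ×ˢ Set.Ioi t) = {ω | t < T₀ ω} := by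
      ext ω; simp
    rw [h1, ← Measure.map_apply hfm (MeasurableSet.univ.prod measurableSet_Ioi), hmap,
      Measure.map_apply hpairYT (MeasurableSet.univ.prod measurableSet_Ioi), h2,
      hT₀geom t]
  · -- independence
    have hfm : Measurable fun ω => (Xacc ω, Tacc ω) := hXaccMeas.prodMk hTaccMeas
    have hXm : Measure.map Xacc μ = Measure.map Y₀ μ := by
      calc Measure.map Xacc μ
          = Measure.map Prod.fst (Measure.map (fun ω => (Xacc ω, Tacc ω)) μ) := by
            rw [Measure.map_map measurable_fst hfm]; rfl
        _ = Measure.map Prod.fst (Measure.map (fun ω => (Y₀ ω, T₀ ω)) μ) := by rw [hmap]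
        _ = Measure.map Y₀ μ := by rw [Measure.map_map measurable_fst hpairYT]; rfl
    have hTm : Measure.map Tacc μ = Measure.map T₀ μ := by
      calc Measure.map Tacc μ
          = Measure.map Prod.snd (Measure.map (fun ω => (Xacc ω, Tacc ω)) μ) := by
            rw [Measure.map_map measurable_snd hfm]; rfl
        _ = Measure.map Prod.snd (Measure.map (fun ω => (Y₀ ω, T₀ ω)) μ) := by rw [hmap]
        _ = Measure.map T₀ μ := by rw [Measure.map_map measurable_snd hpairYT]; rfl
    rw [indepFun_iff_map_prod_eq_prod_map_map hXaccMeas.aemeasurable hTaccMeas.aemeasurable,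
      hmap, hXm, hTm]
    exact (indepFun_iff_map_prod_eq_prod_map_map hY₀meas.aemeasurable
      hT₀meas.aemeasurable).mp hT₀Y₀.symm
end

section
/- Let τʲ and Xʲ, j=1,…,N, be independent pairs where each τʲ is geometric(p) on {1,2,…}, each Xʲ takes values in a measurable space with common law η, and τʲ is independent of Xʲ. Let K = min{j : τʲ = min_i τⁱ}. Then X^K (the value X at the random index K) has law η and is independent of the sigma-algebra generated by (K, τᴷ). -/
open MeasureTheory ProbabilityTheory Set

/-- if `(τʲ, Xʲ)`, `j = 0, …, N-1`, are independent pairs with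
each `τʲ` geometric(p) on `{1,2,…}`, each `Xʲ` of law `η`, and `τʲ`
independent of `Xʲ`, and `K` is the smallest index attaining the minimum of
the `τʲ`, then `X^K` has law `η` and is independent of the sigma-algebra
generated by `(K, τᴷ)`. -/
theorem value_at_argmin_indep
    {Ω E : Type*} [MeasurableSpace Ω] [MeasurableSpace E]
    (μ : Measure Ω) [IsProbabilityMeasure μ]
    (N : ℕ) (hN : 1 ≤ N) (p : ℝ) (hp0 : 0 < p) (hp1 : p < 1)
    (η : Measure E) [IsProbabilityMeasure η]
    (τ : ℕ → Ω → ℕ) (X : ℕ → Ω → E)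
    (hτmeas : ∀ j, Measurable (τ j)) (hXmeas : ∀ j, Measurable (X j))
    (hindep : iIndepFun
      (fun j : Fin N => fun ω => (τ j ω, X j ω)) μ)
    (hgeom : ∀ j < N, ∀ t : ℕ, μ {ω | t < τ j ω} = ENNReal.ofReal ((1 - p) ^ t))
    (hlaw : ∀ j < N, Measure.map (X j) μ = η)
    (hτX : ∀ j < N, IndepFun (τ j) (X j) μ)
    (K : Ω → ℕ)
    (hK : ∀ ω, K ω = sInf {j | j < N ∧ τ j ω = sInf {t | ∃ i < N, τ i ω = t}}) :
    Measure.map (fun ω => X (K ω) ω) μ = η ∧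
      IndepFun (fun ω => X (K ω) ω) (fun ω => (K ω, τ (K ω) ω)) μ := by
  classical
  -- `K ω` is a valid index attaining the minimum
  have hKmem : ∀ ω, K ω < N ∧ τ (K ω) ω = sInf {t | ∃ i < N, τ i ω = t} := by
    intro ω
    have hne0 : ({t | ∃ i < N, τ i ω = t}).Nonempty := ⟨τ 0 ω, 0, hN, rfl⟩
    obtain ⟨i, hi, him⟩ := Nat.sInf_mem hne0
    have hne : ({j | j < N ∧ τ j ω = sInf {t | ∃ i < N, τ i ω = t}}).Nonempty :=
      ⟨i, hi, him⟩
    have h := Nat.sInf_mem hne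
    rwa [← hK ω] at h
  -- characterization of the event `K = j ∧ τ j = t`
  have key : ∀ j, j < N → ∀ t ω, (K ω = j ∧ τ j ω = t) ↔
      (τ j ω = t ∧ (∀ i, i < j → t < τ i ω) ∧ (∀ i, j < i → i < N → t ≤ τ i ω)) := by
    intro j hj t ω
    have hlb : ∀ i, i < N → sInf {t | ∃ i < N, τ i ω = t} ≤ τ i ω :=
      fun i hi => Nat.sInf_le ⟨i, hi, rfl⟩
    obtain ⟨hKlt, hKval⟩ := hKmem ω
    constructor
    · rintro ⟨hKj, hτt⟩
      have hmt : sInf {t | ∃ i < N, τ i ω = t} = t := by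
        rw [← hKval, hKj, hτt]
      refine ⟨hτt, ?_, ?_⟩
      · intro i hi
        have hiN : i < N := lt_trans (hKj ▸ hi) hKlt
        have hle : t ≤ τ i ω := hmt ▸ hlb i hiN
        rcases lt_or_eq_of_le hle with h | h
        · exact h
        · exfalso
          have hmemi : i ∈ {j | j < N ∧ τ j ω = sInf {t | ∃ i < N, τ i ω = t}} :=
            ⟨hiN, by rw [← h, hmt]⟩
          have := Nat.sInf_le hmemi
          rw [← hK ω, hKj] at this
          omega
      · intro i _ hiN
        exact hmt ▸ hlb i hiN
    · rintro ⟨hτt, hlt, hge⟩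
      have hall : ∀ i, i < N → t ≤ τ i ω := by
        intro i hiN
        rcases lt_trichotomy i j with h | h | h
        · exact (hlt i h).le
        · exact le_of_eq (by rw [h, hτt])
        · exact hge i h hiN
      have hmt : sInf {t | ∃ i < N, τ i ω = t} = t := by
        refine le_antisymm (Nat.sInf_le ⟨j, hj, hτt⟩) ?_
        have hne0 : ({t | ∃ i < N, τ i ω = t}).Nonempty := ⟨τ 0 ω, 0, hN, rfl⟩
        obtain ⟨i, hi, him⟩ := Nat.sInf_mem hne0
        exact him ▸ hall i hi
      refine ⟨?_, hτt⟩
      rw [hK ω]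
      have hmemj : j ∈ {j' | j' < N ∧ τ j' ω = sInf {t | ∃ i < N, τ i ω = t}} :=
        ⟨hj, by rw [hτt, hmt]⟩
      refine le_antisymm (Nat.sInf_le hmemj) ?_
      by_contra hcon
      push_neg at hcon
      obtain ⟨hi1, hi2⟩ := Nat.sInf_mem (⟨j, hmemj⟩ :
        ({j' | j' < N ∧ τ j' ω = sInf {t | ∃ i < N, τ i ω = t}}).Nonempty)
      have := hlt _ hcon
      rw [hi2, hmt] at this
      omega
  -- the partition events
  set e : ℕ → ℕ → Set Ω := fun j t => {ω | K ω = j ∧ τ j ω = t} with he_def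
  have he_empty : ∀ j t, N ≤ j → e j t = ∅ := by
    intro j t hj
    ext ω
    simp only [he_def, mem_setOf_eq, mem_empty_iff_false, iff_false, not_and]
    intro hKj
    exact absurd ((hKmem ω).1) (by omega)
  have he_meas : ∀ j t, MeasurableSet (e j t) := by
    intro j t
    by_cases hj : j < N
    · have : e j t = (τ j ⁻¹' {t}) ∩ ((⋂ i, ⋂ _ : i < j, {ω | t < τ i ω}) ∩
          ⋂ i, ⋂ _ : j < i, ⋂ _ : i < N, {ω | t ≤ τ i ω}) := by
        ext ω
        simp only [he_def, mem_setOf_eq, mem_inter_iff, mem_preimage, mem_singleton_iff,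
          mem_iInter]
        rw [key j hj t ω]
      rw [this]
      refine (hτmeas j (measurableSet_singleton t)).inter (MeasurableSet.inter ?_ ?_)
      · exact MeasurableSet.iInter fun i => MeasurableSet.iInter fun _ =>
          hτmeas i ((Set.to_countable _).measurableSet)
      · exact MeasurableSet.iInter fun i => MeasurableSet.iInter fun _ =>
          MeasurableSet.iInter fun _ => hτmeas i ((Set.to_countable _).measurableSet)
    · rw [he_empty j t (le_of_not_gt hj)]
      exact MeasurableSet.empty
  -- the key independence computation
  have hprob : ∀ j, j < N → ∀ t, ∀ A : Set E, MeasurableSet A →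
      μ (X j ⁻¹' A ∩ e j t) = μ (X j ⁻¹' A) * μ (e j t) := by
    intro j hj t A hA
    set j' : Fin N := ⟨j, hj⟩ with hj'
    set T : Finset (Fin N) := Finset.univ \ {j'} with hT
    have hdisjST : Disjoint ({j'} : Finset (Fin N)) T := by
      simp [hT, Finset.disjoint_left]
    have hpairmeas : ∀ i : Fin N, Measurable (fun ω => (τ i ω, X i ω)) :=
      fun i => (hτmeas i).prodMk (hXmeas i)
    have h1 := hindep.indepFun_finset {j'} T hdisjST hpairmeas
    have hj'mem : j' ∈ ({j'} : Finset (Fin N)) := Finset.mem_singleton_self j'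
    have h2 : IndepFun (fun ω => (τ j ω, X j ω)) (fun ω (i : ↥T) => τ (i : Fin N) ω) μ := by
      have hφ : Measurable (fun v : (↥({j'} : Finset (Fin N)) → ℕ × E) => v ⟨j', hj'mem⟩) :=
        measurable_pi_apply _
      have hψ : Measurable (fun (v : ↥T → ℕ × E) (i : ↥T) => (v i).1) :=
        measurable_pi_lambda _ fun i => (measurable_pi_apply i).fst
      exact h1.comp hφ hψ
    -- the "other indices" event
    set D : Set Ω := {ω | (∀ i, i < j → t < τ i ω) ∧ (∀ i, j < i → i < N → t ≤ τ i ω)}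
      with hD
    have hDeq : D = (fun ω (i : ↥T) => τ (i : Fin N) ω) ⁻¹'
        {v : ↥T → ℕ | ∀ i : ↥T, (((i : Fin N) : ℕ) < j → t < v i) ∧
          (j < ((i : Fin N) : ℕ) → t ≤ v i)} := by
      ext ω
      simp only [hD, mem_setOf_eq, mem_preimage]
      constructor
      · rintro ⟨h1', h2'⟩ i
        exact ⟨fun h => h1' _ h, fun h => h2' _ h (i : Fin N).2⟩
      · intro h
        constructor
        · intro i hi
          have hiN : i < N := lt_trans hi hj
          have hiT : (⟨i, hiN⟩ : Fin N) ∈ T := by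
            simp [hT, hj', Fin.ext_iff]
            omega
          exact (h ⟨⟨i, hiN⟩, hiT⟩).1 hi
        · intro i hi hiN
          have hiT : (⟨i, hiN⟩ : Fin N) ∈ T := by
            simp [hT, hj', Fin.ext_iff]
            omega
          exact (h ⟨⟨i, hiN⟩, hiT⟩).2 hi
    have he_eq : e j t = τ j ⁻¹' {t} ∩ D := by
      ext ω
      simp only [he_def, mem_setOf_eq, mem_inter_iff, mem_preimage, mem_singleton_iff, hD]
      rw [key j hj t ω]
    -- independence applied to two choices of sets
    have hmeasB2 : MeasurableSet {v : ↥T → ℕ | ∀ i : ↥T, (((i : Fin N) : ℕ) < j → t < v i) ∧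
        (j < ((i : Fin N) : ℕ) → t ≤ v i)} :=
      (Set.to_countable _).measurableSet
    have hB1 : MeasurableSet {q : ℕ × E | q.1 = t ∧ q.2 ∈ A} := by
      have : {q : ℕ × E | q.1 = t ∧ q.2 ∈ A} = Prod.fst ⁻¹' {t} ∩ Prod.snd ⁻¹' A := rfl
      rw [this]
      exact (measurable_fst (measurableSet_singleton t)).inter (measurable_snd hA)
    have hpre1 : (fun ω => (τ j ω, X j ω)) ⁻¹' {q : ℕ × E | q.1 = t ∧ q.2 ∈ A} =
        τ j ⁻¹' {t} ∩ X j ⁻¹' A := rfl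
    have hcalc1 := h2.measure_inter_preimage_eq_mul _ _ hB1 hmeasB2
    rw [hpre1, ← hDeq] at hcalc1
    -- hcalc1 : μ (τ j ⁻¹' {t} ∩ X j ⁻¹' A ∩ D) = μ (τ j ⁻¹' {t} ∩ X j ⁻¹' A) * μ D
    have hB1' : MeasurableSet {q : ℕ × E | q.1 = t} := by
      have : {q : ℕ × E | q.1 = t} = Prod.fst ⁻¹' {t} := rfl
      rw [this]
      exact measurable_fst (measurableSet_singleton t)
    have hpre1' : (fun ω => (τ j ω, X j ω)) ⁻¹' {q : ℕ × E | q.1 = t} = τ j ⁻¹' {t} := rfl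
    have hcalc2 := h2.measure_inter_preimage_eq_mul _ _ hB1' hmeasB2
    rw [hpre1', ← hDeq] at hcalc2
    -- hcalc2 : μ (τ j ⁻¹' {t} ∩ D) = μ (τ j ⁻¹' {t}) * μ D
    have hτXjt := (hτX j hj).measure_inter_preimage_eq_mul {t} A
      (measurableSet_singleton t) hA
    -- combine
    rw [he_eq]
    calc μ (X j ⁻¹' A ∩ (τ j ⁻¹' {t} ∩ D))
        = μ (τ j ⁻¹' {t} ∩ X j ⁻¹' A ∩ D) := by
          congr 1
          ext ω
          simp only [mem_inter_iff]
          tauto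
      _ = μ (τ j ⁻¹' {t} ∩ X j ⁻¹' A) * μ D := hcalc1
      _ = μ (τ j ⁻¹' {t}) * μ (X j ⁻¹' A) * μ D := by rw [hτXjt]
      _ = μ (X j ⁻¹' A) * (μ (τ j ⁻¹' {t}) * μ D) := by ring
      _ = μ (X j ⁻¹' A) * μ (τ j ⁻¹' {t} ∩ D) := by rw [hcalc2]
  -- core : for all j t, μ (Xⱼ⁻¹A ∩ e j t) = η A * μ (e j t)
  have hcore : ∀ j t, ∀ A : Set E, MeasurableSet A →
      μ (X j ⁻¹' A ∩ e j t) = η A * μ (e j t) := by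
    intro j t A hA
    by_cases hj : j < N
    · rw [hprob j hj t A hA, ← Measure.map_apply (hXmeas j) hA, hlaw j hj]
    · rw [he_empty j t (le_of_not_gt hj)]
      simp
  -- measurability of K, τ∘K, X∘K
  have hKfiber : ∀ j, K ⁻¹' {j} = ⋃ t, e j t := by
    intro j
    ext ω
    simp only [mem_preimage, mem_singleton_iff, mem_iUnion, he_def, mem_setOf_eq]
    exact ⟨fun h => ⟨τ j ω, h, rfl⟩, fun ⟨t, h, _⟩ => h⟩
  have hKmeas : Measurable K := by
    apply measurable_to_countable'
    intro j
    rw [hKfiber j]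
    exact MeasurableSet.iUnion fun t => he_meas j t
  have hτKmeas : Measurable fun ω => τ (K ω) ω := by
    apply measurable_to_countable'
    intro t
    have : (fun ω => τ (K ω) ω) ⁻¹' {t} = ⋃ j, e j t := by
      ext ω
      simp only [mem_preimage, mem_singleton_iff, mem_iUnion, he_def, mem_setOf_eq]
      exact ⟨fun h => ⟨K ω, rfl, h⟩, fun ⟨j, hj, h⟩ => by rw [hj]; exact h⟩
    rw [this]
    exact MeasurableSet.iUnion fun j => he_meas j t
  have hfmeas : Measurable fun ω => X (K ω) ω := by
    intro A hA
    have : (fun ω => X (K ω) ω) ⁻¹' A = ⋃ j, (K ⁻¹' {j} ∩ X j ⁻¹' A) := by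
      ext ω
      simp only [mem_preimage, mem_iUnion, mem_inter_iff, mem_singleton_iff]
      exact ⟨fun h => ⟨K ω, rfl, h⟩, fun ⟨j, hj, h⟩ => by rw [hj]; exact h⟩
    rw [this]
    exact MeasurableSet.iUnion fun j =>
      (hKmeas (measurableSet_singleton j)).inter (hXmeas j hA)
  have hgmeas : Measurable fun ω => (K ω, τ (K ω) ω) := hKmeas.prodMk hτKmeas
  -- the master computation
  have master : ∀ A : Set E, MeasurableSet A → ∀ S : Set (ℕ × ℕ),
      μ ((fun ω => X (K ω) ω) ⁻¹' A ∩ (fun ω => (K ω, τ (K ω) ω)) ⁻¹' S) =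
        η A * μ ((fun ω => (K ω, τ (K ω) ω)) ⁻¹' S) := by
    intro A hA S
    have hdecomp : ∀ B : Set E, (fun ω => X (K ω) ω) ⁻¹' B ∩
        (fun ω => (K ω, τ (K ω) ω)) ⁻¹' S =
        ⋃ jt : S, (X (jt : ℕ × ℕ).1 ⁻¹' B ∩ e (jt : ℕ × ℕ).1 (jt : ℕ × ℕ).2) := by
      intro B
      ext ω
      simp only [mem_inter_iff, mem_preimage, iUnion_coe_set, mem_iUnion, he_def, mem_setOf_eq]
      constructor
      · rintro ⟨hB, hS⟩
        exact ⟨(K ω, τ (K ω) ω), hS, hB, rfl, rfl⟩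
      · rintro ⟨⟨j, t⟩, hS, hB, hKj, hτt⟩
        refine ⟨by rw [hKj]; exact hB, ?_⟩
        have : (K ω, τ (K ω) ω) = (j, t) := by
          rw [hKj, hτt]
        rw [this]
        exact hS
    have hdisjoint : ∀ B : Set E, Pairwise (Function.onFun Disjoint
        fun jt : S => X (jt : ℕ × ℕ).1 ⁻¹' B ∩ e (jt : ℕ × ℕ).1 (jt : ℕ × ℕ).2) := by
      intro B jt jt' hne
      simp only [Function.onFun]
      rw [Set.disjoint_left]
      rintro ω ⟨-, hKj, hτt⟩ ⟨-, hKj', hτt'⟩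
      apply hne
      apply Subtype.ext
      have : (jt : ℕ × ℕ) = (jt' : ℕ × ℕ) := by
        ext
        · rw [← hKj, ← hKj']
        · rw [← hτt, ← hτt', ← hKj, ← hKj']
      exact this
    have hμdecomp : ∀ B : Set E, MeasurableSet B →
        μ ((fun ω => X (K ω) ω) ⁻¹' B ∩ (fun ω => (K ω, τ (K ω) ω)) ⁻¹' S) =
        ∑' jt : S, μ (X (jt : ℕ × ℕ).1 ⁻¹' B ∩ e (jt : ℕ × ℕ).1 (jt : ℕ × ℕ).2) := by
      intro B hB
      rw [hdecomp B]
      exact measure_iUnion (hdisjoint B)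
        (fun jt => (hXmeas _ hB).inter (he_meas _ _))
    rw [hμdecomp A hA]
    have huniv : μ ((fun ω => (K ω, τ (K ω) ω)) ⁻¹' S) =
        ∑' jt : S, μ (e (jt : ℕ × ℕ).1 (jt : ℕ × ℕ).2) := by
      have h1 := hμdecomp univ MeasurableSet.univ
      simp only [preimage_univ, univ_inter] at h1
      rw [h1]
    rw [huniv, ← ENNReal.tsum_mul_left]
    exact tsum_congr fun jt => hcore _ _ A hA
  -- conclusion
  have hmap : Measure.map (fun ω => X (K ω) ω) μ = η := by
    apply Measure.ext
    intro A hA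
    rw [Measure.map_apply hfmeas hA]
    have h := master A hA univ
    simp only [preimage_univ, inter_univ, measure_univ, mul_one] at h
    exact h
  refine ⟨hmap, ?_⟩
  rw [indepFun_iff_measure_inter_preimage_eq_mul]
  intro A S hA hS
  rw [master A hA S]
  congr 1
  rw [← Measure.map_apply hfmeas hA, hmap]
end
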